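/- arXiv:2201.04564 — 5 statements merged into one kernel-verified Lean document; each statement's English description precedes it below -/
import Mathlib

section
/- Let k: ℤ → [0,∞) be a nontrivial kernel with k(0)=0, k(−j)=k(j) for all j ∈ ℤ, and ∑_{j∈ℤ} k(j) < ∞, and suppose k has finite α-th moment for some α > 0, i.e. ∑_{j∈ℕ} k(j) j^α < ∞. Suppose L satisfies CD_Υ(0,F) with a CD-function F such that the function g defined by g(x) = F(x)/x for x > 0 and g(0) = 0 satisfies g(x) + g(y) ≤ g(x+y) for all x,y ∈ [0,∞). Let φ: (0,∞) → (0,∞) be the relaxation function associated with 2F, i.e. φ is differentiable with φ'(t) = −2F(φ(t)) for all t > 0 and φ(t) → ∞ as t → 0+. Let u: [0,∞) × ℤ → (0,∞) be bounded, continuously differentiable in time, and satisfy ∂_t u(t,x) = Lu(t,x) for all (t,x) ∈ (0,∞) × ℤ. Then for v(t,x) = log u(t,x) one has: (1) ∑_{j∈ℤ} k(j)|v(t,x+j)| < ∞ for every (t,x) ∈ (0,∞) × ℤ; (2) −Lv(t,x) ≤ φ(t) for all (t,x) ∈ (0,∞) × ℤ; (3) ∂_t v(t,x) ≥ Ψ_Υ(v(t,·))(x)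 − φ(t) for all (t,x) ∈ (0,∞) × ℤ. -/
open scoped BigOperators
open Filter Set
open scoped Topology

noncomputable section

/-- `Υ(r) = e^r − 1 − r`. -/
def Ups (r : ℝ) : ℝ := Real.exp r - 1 - r

/-- `H(x) = (1/2) e^{−x} Υ(2x)`. -/
def Hfun (x : ℝ) : ℝ := (1 / 2) * Real.exp (-x) * Ups (2 * x)

/-- The long-range jump operator `L u (x) = ∑_{j∈ℤ} k(j)(u(x+j) − u(x))`. -/
def Lop (k : ℤ → ℝ) (u : ℤ → ℝ) (x : ℤ) : ℝ := ∑' j : ℤ, k j * (u (x + j) - u x)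

/-- `Ψ_Υ(u)(x) = ∑_{j∈ℤ} k(j) Υ(u(x+j) − u(x))`. -/
def PsiUps (k : ℤ → ℝ) (u : ℤ → ℝ) (x : ℤ) : ℝ := ∑' j : ℤ, k j * Ups (u (x + j) - u x)

/-- `Ψ_{2,Υ}(u)(x)`. -/
def Psi2 (k : ℤ → ℝ) (u : ℤ → ℝ) (x : ℤ) : ℝ :=
  (1 / 2) * ∑' p : ℤ × ℤ, k p.1 * k p.2 * Real.exp (u (x + p.2) - u x) *
    Ups (u (x + p.1 + p.2) - u (x + p.1) - u (x + p.2) + u x)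

/-- A bounded function on `ℤ`. -/
def BddFun (u : ℤ → ℝ) : Prop := ∃ M : ℝ, ∀ x : ℤ, |u x| ≤ M

/-- A nontrivial symmetric integrable kernel on `ℤ` vanishing at `0`. -/
structure IsKernel (k : ℤ → ℝ) : Prop where
  nonneg : ∀ j, 0 ≤ k j
  zero_at_zero : k 0 = 0
  symm : ∀ j, k (-j) = k j
  summable : Summable k
  nontrivial : ∃ j, k j ≠ 0

/-- A CD-function: continuous on `[0,∞)`, nonnegative, `F(0)=0`, `r ↦ F(r)/r` strictly
increasing on `(0,∞)` and `1/F` integrable at `∞`. -/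
def IsCDFunction (F : ℝ → ℝ) : Prop :=
  ContinuousOn F (Ici 0) ∧ (∀ r, 0 ≤ r → 0 ≤ F r) ∧ F 0 = 0 ∧
    StrictMonoOn (fun r => F r / r) (Ioi 0) ∧
    ∃ a, 0 < a ∧ MeasureTheory.IntegrableOn (fun r => 1 / F r) (Ici a)

/-- The curvature-dimension condition `CD_Υ(0,F)` for the operator generated by `k`. -/
def CDUps (k : ℤ → ℝ) (F : ℝ → ℝ) : Prop :=
  ∀ u : ℤ → ℝ, BddFun u → ∀ x : ℤ, 0 ≤ -Lop k u x → F (-Lop k u x) ≤ Psi2 k u x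

section liyau_aux
open scoped Topology
section helpers
variable {k : ℤ → ℝ}

lemma summable_k_mul (hs : Summable k) (hnn : ∀ j, 0 ≤ k j) {f : ℤ → ℝ} {C : ℝ}
    (hf : ∀ j, |f j| ≤ C) : Summable fun j => k j * f j := by
  apply Summable.of_norm
  have h0 : ∀ j, ‖k j * f j‖ ≤ k j * C := by
    intro j
    rw [Real.norm_eq_abs, abs_mul, abs_of_nonneg (hnn j)]
    exact mul_le_mul_of_nonneg_left (hf j) (hnn j)
  exact Summable.of_nonneg_of_le (fun j => norm_nonneg _) h0 (hs.mul_right C)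

lemma abs_tsum_k_le (hs : Summable k) (hnn : ∀ j, 0 ≤ k j) {f : ℤ → ℝ} {C : ℝ} (hC : 0 ≤ C)
    (hf : ∀ j, |f j| ≤ C) : |∑' j, k j * f j| ≤ (∑' j, k j) * C := by
  calc |∑' j, k j * f j| ≤ ∑' j, |k j * f j| := by
        simpa [abs_mul] using norm_tsum_le_tsum_norm (summable_k_mul hs hnn hf).norm
    _ ≤ ∑' j, k j * C := by
        apply Summable.tsum_le_tsum _ (summable_k_mul hs hnn hf).abs (hs.mul_right C)
        intro j
        rw [abs_mul, abs_of_nonneg (hnn j)]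
        exact mul_le_mul_of_nonneg_left (hf j) (hnn j)
    _ = (∑' j, k j) * C := tsum_mul_right

lemma summable_kk_mul (hs : Summable k) (hnn : ∀ j, 0 ≤ k j) {f : ℤ × ℤ → ℝ} {C : ℝ}
    (hf : ∀ p, |f p| ≤ C) : Summable fun p : ℤ × ℤ => k p.1 * k p.2 * f p := by
  apply Summable.of_norm
  have hkk : Summable fun p : ℤ × ℤ => k p.1 * k p.2 := by
    have := summable_mul_of_summable_norm (f := k) (g := k) ?_ ?_
    · exact this
    · simpa [Real.norm_eq_abs, abs_of_nonneg (hnn _)] using hs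
    · simpa [Real.norm_eq_abs, abs_of_nonneg (hnn _)] using hs
  apply Summable.of_nonneg_of_le (fun p => norm_nonneg _) _ (hkk.mul_right C)
  intro p
  rw [Real.norm_eq_abs, abs_mul, abs_mul, abs_of_nonneg (hnn _), abs_of_nonneg (hnn _)]
  exact mul_le_mul_of_nonneg_left (hf p) (mul_nonneg (hnn _) (hnn _))

/-- monotonicity from pointwise derivative bound -/
lemma le_self_of_deriv_nonneg {f f' : ℝ → ℝ} {a b : ℝ} (hab : a ≤ b)
    (hd : ∀ s ∈ Icc a b, HasDerivAt f (f' s) s) (h0 : ∀ s ∈ Icc a b, 0 ≤ f' s) :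
    f a ≤ f b := by
  rcases eq_or_lt_of_le hab with rfl | hab'
  · exact le_rfl
  · have hmono : MonotoneOn f (Icc a b) := by
      apply monotoneOn_of_deriv_nonneg (convex_Icc a b)
      · exact fun s hs => (hd s hs).continuousAt.continuousWithinAt
      · intro s hs
        rw [interior_Icc] at hs
        exact (hd s (Ioo_subset_Icc_self hs)).differentiableAt.differentiableWithinAt
      · intro s hs
        rw [interior_Icc] at hs
        rw [(hd s (Ioo_subset_Icc_self hs)).deriv]
        exact h0 s (Ioo_subset_Icc_self hs)
    exact hmono (left_mem_Icc.2 hab) (right_mem_Icc.2 hab) hab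



lemma mul_neg_log_le {x : ℝ} (hx : 0 < x) : x * (-Real.log x) ≤ 2 * x ^ (1/2 : ℝ) := by
  set y := x ^ (1/2 : ℝ) with hy
  have hy0 : 0 < y := Real.rpow_pos_of_pos hx _
  have hyy : y * y = x := by
    rw [hy, ← Real.rpow_add hx]; norm_num
  have hlog : Real.log x = 2 * Real.log y := by
    rw [hy, Real.log_rpow hx]; ring
  have h1 : -Real.log y = Real.log y⁻¹ := (Real.log_inv y).symm
  have h2 : Real.log y⁻¹ ≤ y⁻¹ := le_trans (Real.log_le_sub_one_of_pos (by positivity)) (by linarith)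
  calc x * (-Real.log x) = 2 * (x * (-Real.log y)) := by rw [hlog]; ring
    _ ≤ 2 * (x * y⁻¹) := by
        apply mul_le_mul_of_nonneg_left _ (by norm_num)
        rw [h1]
        exact mul_le_mul_of_nonneg_left h2 hx.le
    _ = 2 * y := by rw [← hyy]; field_simp

lemma summable_exp_neg_rpow {α : ℝ} (hα : 0 < α) :
    Summable fun n : ℕ => Real.exp (-((n : ℝ) ^ α) / 2) := by
  obtain ⟨m, hm, hm0⟩ : ∃ m : ℕ, 2 ≤ (m : ℝ) * α ∧ 0 < m := by
    refine ⟨⌈2 / α⌉₊ + 1, ?_, Nat.succ_pos _⟩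
    have h1 : 2 / α ≤ (⌈2 / α⌉₊ + 1 : ℝ) := le_trans (Nat.le_ceil _) (by push_cast; linarith)
    calc (2 : ℝ) = (2 / α) * α := by field_simp
      _ ≤ ((⌈2 / α⌉₊ + 1 : ℕ) : ℝ) * α := by
          apply mul_le_mul_of_nonneg_right _ hα.le; push_cast at h1 ⊢; linarith
  have key : ∀ n : ℕ, 1 ≤ n →
      Real.exp (-((n : ℝ) ^ α) / 2) ≤ (2 * m : ℝ) ^ m * (((n : ℝ) ^ (2:ℝ))⁻¹) := by
    intro n hn
    have hn1 : (1 : ℝ) ≤ (n : ℝ) := by exact_mod_cast hn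
    set t : ℝ := (n : ℝ) ^ α / 2 with ht
    have ht0 : 0 ≤ t := by positivity
    have hpow : (t / m) ^ m ≤ Real.exp t := by
      have h1 : t / m ≤ Real.exp (t / m) := by
        have := Real.add_one_le_exp (t / m); linarith
      have h2 : (t / m) ^ m ≤ (Real.exp (t / m)) ^ m :=
        pow_le_pow_left₀ (by positivity) h1 m
      have h3 : (Real.exp (t / m)) ^ m = Real.exp t := by
        rw [← Real.exp_nat_mul]
        congr 1
        field_simp
      rwa [h3] at h2
    have htm : (t / m) ^ m = (n : ℝ) ^ (α * m) / (2 * m : ℝ) ^ m := by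
      have : t / m = (n : ℝ) ^ α / (2 * m) := by rw [ht]; ring
      rw [this, div_pow, ← Real.rpow_natCast ((n:ℝ) ^ α) m, ← Real.rpow_mul (by positivity)]
    have h4 : (n : ℝ) ^ (2:ℝ) ≤ (n : ℝ) ^ (α * m) := by
      apply Real.rpow_le_rpow_of_exponent_le hn1
      rw [mul_comm]; exact hm
    have h5 : (n : ℝ) ^ (2:ℝ) / (2 * m : ℝ) ^ m ≤ Real.exp t := by
      refine le_trans ?_ hpow
      rw [htm]
      apply div_le_div_of_nonneg_right h4 (by positivity)
    have hnp : 0 < (n : ℝ) ^ (2:ℝ) := by positivity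
    have h6 : Real.exp (-t) = (Real.exp t)⁻¹ := by rw [Real.exp_neg]
    have h7 : (Real.exp t)⁻¹ ≤ ((n : ℝ) ^ (2:ℝ) / (2 * m : ℝ) ^ m)⁻¹ := by
      apply inv_anti₀ (by positivity) h5
    calc Real.exp (-((n : ℝ) ^ α) / 2) = Real.exp (-t) := by rw [ht]; ring_nf
      _ ≤ ((n : ℝ) ^ (2:ℝ) / (2 * m : ℝ) ^ m)⁻¹ := by rw [h6]; exact h7
      _ = (2 * m : ℝ) ^ m * (((n : ℝ) ^ (2:ℝ))⁻¹) := by field_simp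
  rw [← summable_nat_add_iff 1]
  have hs : Summable fun n : ℕ => (2 * m : ℝ) ^ m * ((((n + 1 : ℕ) : ℝ) ^ (2:ℝ))⁻¹) := by
    apply Summable.mul_left
    have hbase : Summable fun n : ℕ => (((n : ℝ) ^ (2:ℝ))⁻¹) := by
      have : ∀ n : ℕ, ((n : ℝ) ^ (2:ℝ))⁻¹ = 1 / (n : ℝ) ^ (2:ℕ) := by
        intro n
        rw [one_div]
        congr 1
        rw [← Real.rpow_natCast (n:ℝ) 2]
        norm_num
      simp only [this]
      exact Real.summable_one_div_nat_pow.mpr (by norm_num)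
    exact (summable_nat_add_iff 1).mpr hbase
  apply Summable.of_nonneg_of_le (fun n => (Real.exp_pos _).le) _ hs
  intro n
  exact key (n + 1) (Nat.le_add_left 1 n)

set_option maxHeartbeats 1000000 in
lemma summable_k_log {k : ℤ → ℝ} (hnn : ∀ j, 0 ≤ k j) (hsymm : ∀ j, k (-j) = k j)
    {α : ℝ} (hα : 0 < α) (hmom : Summable fun n : ℕ => k (n : ℤ) * (n : ℝ) ^ α) :
    Summable fun j : ℤ => k j * max 0 (-Real.log (k j)) := by
  have hnat : Summable fun n : ℕ => k (n : ℤ) * max 0 (-Real.log (k (n : ℤ))) := by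
    have hbd : ∀ n : ℕ, k (n : ℤ) * max 0 (-Real.log (k (n : ℤ))) ≤
        k (n : ℤ) * (n : ℝ) ^ α + 2 * Real.exp (-((n : ℝ) ^ α) / 2) := by
      intro n
      rcases eq_or_lt_of_le (hnn (n : ℤ)) with h0 | hpos
      · rw [← h0]
        have : (0:ℝ) ≤ (n:ℝ) ^ α := by positivity
        have := (Real.exp_pos (-((n : ℝ) ^ α) / 2)).le
        nlinarith
      · by_cases hb : Real.exp (-((n : ℝ) ^ α)) ≤ k (n : ℤ)
        · have hlog : -Real.log (k (n : ℤ)) ≤ (n : ℝ) ^ α := by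
            have := Real.log_le_log (Real.exp_pos _) hb
            rw [Real.log_exp] at this
            linarith
          have hmax : max 0 (-Real.log (k (n : ℤ))) ≤ (n : ℝ) ^ α :=
            max_le (by positivity) hlog
          have := (Real.exp_pos (-((n : ℝ) ^ α) / 2)).le
          nlinarith [mul_le_mul_of_nonneg_left hmax (hnn (n : ℤ))]
        · push_neg at hb
          have hle1 : k (n : ℤ) < 1 := lt_of_lt_of_le hb (by
            rw [← Real.exp_zero]
            exact Real.exp_le_exp.mpr (neg_nonpos.mpr (by positivity)))
          have hlogneg : Real.log (k (n : ℤ)) < 0 := Real.log_neg hpos hle1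
          have hmax : max 0 (-Real.log (k (n : ℤ))) = -Real.log (k (n : ℤ)) :=
            max_eq_right (by linarith)
          rw [hmax]
          have h1 : k (n : ℤ) * (-Real.log (k (n : ℤ))) ≤ 2 * (k (n : ℤ)) ^ (1/2 : ℝ) :=
            mul_neg_log_le hpos
          have h2 : (k (n : ℤ)) ^ (1/2 : ℝ) ≤ (Real.exp (-((n : ℝ) ^ α))) ^ (1/2 : ℝ) :=
            Real.rpow_le_rpow (hnn _) hb.le (by norm_num)
          have h3 : (Real.exp (-((n : ℝ) ^ α))) ^ (1/2 : ℝ) = Real.exp (-((n : ℝ) ^ α) / 2) := by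
            rw [← Real.exp_mul]
            congr 1
            ring
          have h4 : (0:ℝ) ≤ k (n : ℤ) * (n : ℝ) ^ α := by positivity
          rw [h3] at h2
          linarith
    apply Summable.of_nonneg_of_le
      (fun n => mul_nonneg (hnn _) (le_max_left _ _)) hbd
      (hmom.add ((summable_exp_neg_rpow hα).mul_left 2))
  apply Summable.of_nat_of_neg hnat
  have : ∀ n : ℕ, k (-(n:ℤ)) = k (n:ℤ) := fun n => hsymm _
  simpa only [this] using hnat

lemma hasDerivAt_G (hs : Summable k) (hnn : ∀ j, 0 ≤ k j) {w wt : ℝ → ℤ → ℝ} {δ M' P : ℝ}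
    (hδ : 0 < δ) (hlb : ∀ t, 0 < t → ∀ y, δ ≤ w t y) (hub : ∀ t, 0 < t → ∀ y, w t y ≤ M')
    (hd : ∀ y t, 0 < t → HasDerivAt (fun s => w s y) (wt t y) t)
    (hP : 0 ≤ P) (hPb : ∀ t, 0 < t → ∀ y, |wt t y / w t y| ≤ P)
    {t : ℝ} (ht : 0 < t) (x : ℤ) :
    HasDerivAt (fun s => ∑' j : ℤ, k j * (Real.log (w s x) - Real.log (w s (x + j))))
      (∑' j : ℤ, k j * (wt t x / w t x - wt t (x + j) / w t (x + j))) t := by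
  set v : ℝ → ℤ → ℝ := fun s y => Real.log (w s y) with hv
  have hvd : ∀ y : ℤ, ∀ s : ℝ, 0 < s → HasDerivAt (fun r => v r y) (wt s y / w s y) s := by
    intro y s hs'
    exact (hd y s hs').log (by have := hlb s hs' y; linarith)
  have hvLip : ∀ y : ℤ, ∀ s r : ℝ, 0 < s → 0 < r → |v s y - v r y| ≤ P * |s - r| := by
    intro y s r hs' hr'
    have := Convex.norm_image_sub_le_of_norm_hasDerivWithin_le
      (f := fun r => v r y) (f' := fun r => wt r y / w r y) (s := Ioi (0:ℝ))
      (fun r hr => (hvd y r hr).hasDerivWithinAt)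
      (fun r hr => by rw [Real.norm_eq_abs]; exact hPb r hr y)
      (convex_Ioi 0) hr' hs'
    simpa [Real.norm_eq_abs] using this
  have hR : ∀ s : ℝ, 0 < s → ∀ y : ℤ, |v s x - v s y| ≤ Real.log M' - Real.log δ := by
    intro s hs' y
    have h1 : Real.log δ ≤ v s x := Real.log_le_log hδ (hlb s hs' x)
    have h2 : v s x ≤ Real.log M' := by
      have hM : 0 < M' := lt_of_lt_of_le hδ ((hlb s hs' x).trans (hub s hs' x))
      exact Real.log_le_log (lt_of_lt_of_le hδ (hlb s hs' x)) (hub s hs' x)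
    have h3 : Real.log δ ≤ v s y := Real.log_le_log hδ (hlb s hs' y)
    have h4 : v s y ≤ Real.log M' :=
      Real.log_le_log (lt_of_lt_of_le hδ (hlb s hs' y)) (hub s hs' y)
    rw [abs_le]; constructor <;> linarith
  rw [hasDerivAt_iff_tendsto_slope]
  have hmem : ∀ᶠ s in nhdsWithin t {t}ᶜ, 0 < s ∧ s ≠ t := by
    have h1 : ∀ᶠ s in nhdsWithin t {t}ᶜ, 0 < s :=
      nhdsWithin_le_nhds ((isOpen_Ioi).eventually_mem (show t ∈ Ioi 0 from ht))
    have h2 : ∀ᶠ s in nhdsWithin t {t}ᶜ, s ≠ t := by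
      filter_upwards [self_mem_nhdsWithin] with s hs
      simpa using hs
    exact h1.and h2
  have key := tendsto_tsum_of_dominated_convergence (𝓕 := nhdsWithin t {t}ᶜ)
    (f := fun s (j : ℤ) => slope (fun r => k j * (v r x - v r (x + j))) t s)
    (g := fun j : ℤ => k j * (wt t x / w t x - wt t (x + j) / w t (x + j)))
    (bound := fun j : ℤ => k j * (2 * P)) (hs.mul_right _)
    (by
      intro j
      exact hasDerivAt_iff_tendsto_slope.mp
        (((hvd x t ht).sub (hvd (x + j) t ht)).const_mul (k j)))
    (by
      filter_upwards [hmem] with s hsm j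
      obtain ⟨hs0, hst⟩ := hsm
      rw [slope_def_field]
      have hnum : |k j * (v s x - v s (x + j)) - k j * (v t x - v t (x + j))| ≤
          k j * (2 * P) * |s - t| := by
        have heq : k j * (v s x - v s (x + j)) - k j * (v t x - v t (x + j)) =
            k j * ((v s x - v t x) - (v s (x + j) - v t (x + j))) := by ring
        rw [heq, abs_mul, abs_of_nonneg (hnn j)]
        have hb : |(v s x - v t x) - (v s (x + j) - v t (x + j))| ≤ 2 * P * |s - t| := by
          have b1 := hvLip x s t hs0 ht
          have b2 := hvLip (x + j) s t hs0 ht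
          calc |(v s x - v t x) - (v s (x + j) - v t (x + j))|
              ≤ |v s x - v t x| + |v s (x + j) - v t (x + j)| := abs_sub _ _
            _ ≤ 2 * P * |s - t| := by linarith
        calc k j * |(v s x - v t x) - (v s (x + j) - v t (x + j))|
            ≤ k j * (2 * P * |s - t|) := mul_le_mul_of_nonneg_left hb (hnn j)
          _ = k j * (2 * P) * |s - t| := by ring
      rw [Real.norm_eq_abs, abs_div]
      rw [div_le_iff₀ (by simpa [sub_ne_zero] using abs_pos.mpr (sub_ne_zero.mpr hst))]
      exact hnum)
  apply key.congr'
  filter_upwards [hmem] with s hsm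
  obtain ⟨hs0, hst⟩ := hsm
  have hsum_s : Summable fun j : ℤ => k j * (v s x - v s (x + j)) :=
    summable_k_mul hs hnn (fun j => hR s hs0 (x + j))
  have hsum_t : Summable fun j : ℤ => k j * (v t x - v t (x + j)) :=
    summable_k_mul hs hnn (fun j => hR t ht (x + j))
  rw [slope_def_field, ← Summable.tsum_sub hsum_s hsum_t, ← tsum_div_const]
  exact tsum_congr fun j => by rw [slope_def_field]

lemma step3 {k : ℤ → ℝ} (hs : Summable k) (hnn : ∀ j, 0 ≤ k j) {v : ℤ → ℝ} {R : ℝ}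
    (hosc : ∀ y z : ℤ, |v y - v z| ≤ R) (x : ℤ) :
    (∑' j : ℤ, k j * ((∑' l : ℤ, k l * (Real.exp (v (x + l) - v x) - 1)) -
        ∑' l : ℤ, k l * (Real.exp (v (x + j + l) - v (x + j)) - 1))) =
    (∑' l : ℤ, k l * Real.exp (v (x + l) - v x) *
        ((∑' j : ℤ, k j * (v (x + l) - v (x + l + j))) -
          ∑' j : ℤ, k j * (v x - v (x + j)))) - 2 * Psi2 k v x := by
  have hR0 : 0 ≤ R := le_trans (abs_nonneg _) (hosc x x)
  set E : ℤ × ℤ → ℝ := fun p => k p.1 * k p.2 *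
    (Real.exp (v (x + p.2) - v x) - Real.exp (v (x + p.1 + p.2) - v (x + p.1))) with hE_def
  set S1 : ℤ × ℤ → ℝ := fun p => k p.1 * k p.2 *
    (Real.exp (v (x + p.2) - v x) *
      (v (x + p.1 + p.2) - v (x + p.1) - v (x + p.2) + v x)) with hS1_def
  set S2 : ℤ × ℤ → ℝ := fun p => k p.1 * k p.2 *
    (Real.exp (v (x + p.2) - v x) *
      Ups (v (x + p.1 + p.2) - v (x + p.1) - v (x + p.2) + v x)) with hS2_def
  -- basic bounds
  have hexp_bd : ∀ y z : ℤ, Real.exp (v y - v z) ≤ Real.exp R := fun y z =>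
    Real.exp_le_exp.mpr (le_trans (le_abs_self _) (hosc y z))
  have hexp_pos : ∀ y z : ℤ, (0:ℝ) < Real.exp (v y - v z) := fun _ _ => Real.exp_pos _
  have hA_bd : ∀ j l : ℤ, |v (x + j + l) - v (x + j) - v (x + l) + v x| ≤ 2 * R := by
    intro j l
    have h1 := hosc (x + j + l) (x + j)
    have h2 := hosc (x + l) x
    calc |v (x + j + l) - v (x + j) - v (x + l) + v x|
        = |(v (x + j + l) - v (x + j)) - (v (x + l) - v x)| := by ring_nf
      _ ≤ |v (x + j + l) - v (x + j)| + |v (x + l) - v x| := abs_sub _ _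
      _ ≤ 2 * R := by linarith
  have hUps_bd : ∀ z : ℝ, |z| ≤ 2 * R → |Ups z| ≤ Real.exp (2 * R) + 1 + 2 * R := by
    intro z hz
    have h1 : Real.exp z ≤ Real.exp (2 * R) := Real.exp_le_exp.mpr (le_trans (le_abs_self _) hz)
    have h2 : 0 < Real.exp z := Real.exp_pos z
    rw [Ups, abs_le]
    constructor <;> cases' abs_le.mp hz with hz1 hz2 <;> nlinarith
  -- summability
  have hE_sum : Summable E :=
    summable_kk_mul hs hnn (C := 2 * Real.exp R) (fun p => by
      have h1 := hexp_bd (x + p.2) x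
      have h2 := hexp_bd (x + p.1 + p.2) (x + p.1)
      have h3 := hexp_pos (x + p.2) x
      have h4 := hexp_pos (x + p.1 + p.2) (x + p.1)
      rw [abs_le]; constructor <;> nlinarith)
  have hS1_sum : Summable S1 :=
    summable_kk_mul hs hnn (C := Real.exp R * (2 * R)) (fun p => by
      rw [abs_mul, abs_of_pos (hexp_pos _ _)]
      exact mul_le_mul (hexp_bd _ _) (hA_bd p.1 p.2) (abs_nonneg _) (Real.exp_pos _).le)
  have hS2_sum : Summable S2 :=
    summable_kk_mul hs hnn (C := Real.exp R * (Real.exp (2 * R) + 1 + 2 * R)) (fun p => by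
      rw [abs_mul, abs_of_pos (hexp_pos _ _)]
      exact mul_le_mul (hexp_bd _ _) (hUps_bd _ (hA_bd p.1 p.2)) (abs_nonneg _)
        (Real.exp_pos _).le)
  -- pointwise identity E = -S1 - S2
  have hpt : ∀ p : ℤ × ℤ, E p = -(S1 p) - S2 p := by
    rintro ⟨j, l⟩
    have hsplit : Real.exp (v (x + j + l) - v (x + j)) =
        Real.exp (v (x + l) - v x) *
          Real.exp (v (x + j + l) - v (x + j) - v (x + l) + v x) := by
      rw [← Real.exp_add]; congr 1; ring
    simp only [hE_def, hS1_def, hS2_def, Ups]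
    rw [hsplit]; ring
  -- LHS equals ∑' p, E p
  have hBsum : ∀ y : ℤ, Summable fun l : ℤ => k l * (Real.exp (v (y + l) - v y) - 1) := by
    intro y
    apply summable_k_mul hs hnn (C := Real.exp R + 1)
    intro l
    have h1 := hexp_bd (y + l) y
    have h2 := hexp_pos (y + l) y
    rw [abs_le]; constructor <;> nlinarith
  have hLHS : (∑' j : ℤ, k j * ((∑' l : ℤ, k l * (Real.exp (v (x + l) - v x) - 1)) -
      ∑' l : ℤ, k l * (Real.exp (v (x + j + l) - v (x + j)) - 1))) = ∑' p : ℤ × ℤ, E p := by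
    rw [Summable.tsum_prod' hE_sum (fun j => by
      have : (fun l => E (j, l)) = fun l => k j * (k l *
          (Real.exp (v (x + l) - v x) - Real.exp (v (x + j + l) - v (x + j)))) := by
        funext l; simp only [hE_def]; ring
      rw [this]
      apply Summable.mul_left
      apply summable_k_mul hs hnn (C := 2 * Real.exp R)
      intro l
      have h1 := hexp_bd (x + l) x
      have h2 := hexp_bd (x + j + l) (x + j)
      have h3 := hexp_pos (x + l) x
      have h4 := hexp_pos (x + j + l) (x + j)
      rw [abs_le]; constructor <;> nlinarith)]
    apply tsum_congr
    intro j
    rw [← Summable.tsum_sub (hBsum x) (hBsum (x + j))]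
    rw [← tsum_mul_left]
    apply tsum_congr
    intro l
    simp only [hE_def]
    rw [add_assoc x j l]
    ring
  -- ∑' S2 = 2 * Psi2
  have hS2_eq : (∑' p : ℤ × ℤ, S2 p) = 2 * Psi2 k v x := by
    rw [Psi2]
    rw [show (2:ℝ) * ((1/2) * ∑' p : ℤ × ℤ, k p.1 * k p.2 * Real.exp (v (x + p.2) - v x) *
        Ups (v (x + p.1 + p.2) - v (x + p.1) - v (x + p.2) + v x)) =
        ∑' p : ℤ × ℤ, k p.1 * k p.2 * Real.exp (v (x + p.2) - v x) *
        Ups (v (x + p.1 + p.2) - v (x + p.1) - v (x + p.2) + v x) by ring]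
    apply tsum_congr
    intro p
    simp only [hS2_def]; ring
  -- ∑' S1 = ∑' l, k l e^c (G x - G (x+l))
  have hGsummand : ∀ y : ℤ, Summable fun j : ℤ => k j * (v y - v (y + j)) := fun y =>
    summable_k_mul hs hnn (fun j => hosc y (y + j))
  have hS1_eq : (∑' p : ℤ × ℤ, S1 p) = ∑' l : ℤ, k l * Real.exp (v (x + l) - v x) *
      ((∑' j : ℤ, k j * (v x - v (x + j))) - ∑' j : ℤ, k j * (v (x + l) - v (x + l + j))) := by
    have hswap : (∑' p : ℤ × ℤ, S1 p) = ∑' q : ℤ × ℤ, S1 (q.2, q.1) := by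
      exact ((Equiv.prodComm ℤ ℤ).tsum_eq S1).symm
    rw [hswap]
    have hsumm_swap : Summable fun q : ℤ × ℤ => S1 (q.2, q.1) :=
      (Equiv.prodComm ℤ ℤ).summable_iff.mpr hS1_sum
    rw [Summable.tsum_prod' hsumm_swap (fun l => by
      have : (fun j => S1 (j, l)) = fun j => (k l * Real.exp (v (x + l) - v x)) *
          (k j * (v (x + j + l) - v (x + j) - v (x + l) + v x)) := by
        funext j; simp only [hS1_def]; ring
      show Summable fun j => S1 (j, l)
      rw [this]
      apply Summable.mul_left
      apply summable_k_mul hs hnn (C := 2 * R) (fun j => hA_bd j l))]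
    apply tsum_congr
    intro l
    simp only
    have heq : (fun j => S1 (j, l)) = fun j => (k l * Real.exp (v (x + l) - v x)) *
        (k j * (v (x + j + l) - v (x + j) - v (x + l) + v x)) := by
      funext j; simp only [hS1_def]; ring
    have hinner : (fun j : ℤ => k j * (v (x + j + l) - v (x + j) - v (x + l) + v x)) =
        fun j : ℤ => k j * (v x - v (x + j)) - k j * (v (x + l) - v (x + l + j)) := by
      funext j
      rw [show x + j + l = x + l + j by ring]
      ring
    rw [heq, tsum_mul_left, hinner, Summable.tsum_sub (hGsummand x) (hGsummand (x + l))]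
  -- put together
  rw [hLHS]
  have : (∑' p : ℤ × ℤ, E p) = -(∑' p : ℤ × ℤ, S1 p) - ∑' p : ℤ × ℤ, S2 p := by
    rw [← tsum_neg, ← Summable.tsum_sub hS1_sum.neg hS2_sum]
    exact tsum_congr fun p => hpt p
  rw [this, hS1_eq, hS2_eq, ← tsum_neg]
  congr 1
  apply tsum_congr
  intro l
  ring

lemma F_mono {F : ℝ → ℝ} (hF : IsCDFunction F) {s r : ℝ} (hs : 0 < s) (hsr : s ≤ r) :
    F s ≤ F r := by
  rcases eq_or_lt_of_le hsr with rfl | hlt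
  · exact le_rfl
  · have hr : 0 < r := hs.trans hlt
    have h1 : F s / s < F r / r := hF.2.2.2.1 (mem_Ioi.mpr hs) (mem_Ioi.mpr hr) hlt
    have h2 : 0 ≤ F r / r := div_nonneg (hF.2.1 r hr.le) hr.le
    have h3 : F s = s * (F s / s) := by field_simp
    have h4 : s * (F s / s) < s * (F r / r) := by
      exact mul_lt_mul_of_pos_left h1 hs
    have h5 : s * (F r / r) ≤ r * (F r / r) := mul_le_mul_of_nonneg_right hsr h2
    have h6 : r * (F r / r) = F r := by field_simp
    linarith

set_option maxHeartbeats 1600000 in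
lemma key2 {k : ℤ → ℝ} (hk : IsKernel k) {F : ℝ → ℝ} (hF : IsCDFunction F)
    (hCD : CDUps k F) {φ : ℝ → ℝ} (hφpos : ∀ t, 0 < t → 0 < φ t)
    (hφode : ∀ t, 0 < t → HasDerivAt φ (-(2 * F (φ t))) t)
    (hφblow : Tendsto φ (nhdsWithin 0 (Ioi 0)) atTop)
    {w wt : ℝ → ℤ → ℝ} {δ M' : ℝ} (hδ : 0 < δ)
    (hlb : ∀ t, 0 < t → ∀ y, δ ≤ w t y) (hub : ∀ t, 0 < t → ∀ y, w t y ≤ M')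
    (hd : ∀ y t, 0 < t → HasDerivAt (fun s => w s y) (wt t y) t)
    (hw : ∀ t, 0 < t → ∀ x, wt t x = Lop k (w t) x) :
    ∀ t, 0 < t → ∀ x : ℤ,
      (∑' j : ℤ, k j * (Real.log (w t x) - Real.log (w t (x + j)))) ≤ φ t := by
  obtain hs := hk.summable
  obtain hnn := hk.nonneg
  set K1 : ℝ := ∑' j, k j with hK1_def
  have hK1nn : 0 ≤ K1 := tsum_nonneg hnn
  have hδM : δ ≤ M' := le_trans (hlb 1 one_pos 0) (hub 1 one_pos 0)
  have hM'pos : 0 < M' := lt_of_lt_of_le hδ hδM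
  set v : ℝ → ℤ → ℝ := fun s y => Real.log (w s y) with hv_def
  set R : ℝ := Real.log M' - Real.log δ with hR_def
  have hvlb : ∀ s, 0 < s → ∀ y, Real.log δ ≤ v s y := fun s hs' y =>
    Real.log_le_log hδ (hlb s hs' y)
  have hvub : ∀ s, 0 < s → ∀ y, v s y ≤ Real.log M' := fun s hs' y =>
    Real.log_le_log (lt_of_lt_of_le hδ (hlb s hs' y)) (hub s hs' y)
  have hR0 : 0 ≤ R := by
    have := hvlb 1 one_pos 0; have := hvub 1 one_pos 0; rw [hR_def]; linarith
  have hosc : ∀ s, 0 < s → ∀ y z, |v s y - v s z| ≤ R := by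
    intro s hs' y z
    have h1 := hvlb s hs' y; have h2 := hvub s hs' y
    have h3 := hvlb s hs' z; have h4 := hvub s hs' z
    rw [abs_le, hR_def]; constructor <;> linarith
  set Cv : ℝ := max |Real.log δ| |Real.log M'| with hCv_def
  have hvbd : ∀ s, 0 < s → ∀ y, |v s y| ≤ Cv := by
    intro s hs' y
    have h1 := hvlb s hs' y; have h2 := hvub s hs' y
    rcases abs_cases (v s y) with ⟨he, _⟩ | ⟨he, _⟩
    · rw [he]; exact le_trans h2 (le_trans (le_abs_self _) (le_max_right _ _))
    · rw [he]
      refine le_trans ?_ (le_max_left _ _)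
      rw [← abs_neg]
      exact le_trans (by linarith) (le_abs_self _)
  set G : ℝ → ℤ → ℝ := fun s x => ∑' j : ℤ, k j * (v s x - v s (x + j)) with hG_def
  have hGsummand : ∀ s, 0 < s → ∀ x, Summable fun j : ℤ => k j * (v s x - v s (x + j)) :=
    fun s hs' x => summable_k_mul hs hnn (fun j => hosc s hs' x (x + j))
  have hGbd : ∀ s, 0 < s → ∀ x, |G s x| ≤ K1 * R := fun s hs' x =>
    abs_tsum_k_le hs hnn hR0 (fun j => hosc s hs' x (x + j))
  have hwt_bd : ∀ s, 0 < s → ∀ y, |wt s y| ≤ K1 * (M' - δ) := by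
    intro s hs' y
    rw [hw s hs' y, Lop]
    apply abs_tsum_k_le hs hnn (by linarith)
    intro j
    have h1 := hlb s hs' (y + j); have h2 := hub s hs' (y + j)
    have h3 := hlb s hs' y; have h4 := hub s hs' y
    rw [abs_le]; constructor <;> linarith
  set P : ℝ := K1 * (M' - δ) / δ with hP_def
  have hP0 : 0 ≤ P := div_nonneg (mul_nonneg hK1nn (by linarith)) hδ.le
  have hp_bd : ∀ s, 0 < s → ∀ y, |wt s y / w s y| ≤ P := by
    intro s hs' y
    rw [abs_div, abs_of_pos (lt_of_lt_of_le hδ (hlb s hs' y))]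
    exact div_le_div₀ (mul_nonneg hK1nn (by linarith)) (hwt_bd s hs' y) hδ (hlb s hs' y)
  set DG : ℝ → ℤ → ℝ :=
    fun t x => ∑' j : ℤ, k j * (wt t x / w t x - wt t (x + j) / w t (x + j)) with hDG_def
  have hGder : ∀ t, 0 < t → ∀ x, HasDerivAt (fun s => G s x) (DG t x) t := fun t ht x =>
    hasDerivAt_G hs hnn hδ hlb hub hd hP0 hp_bd ht x
  set LC : ℝ := K1 * (2 * P) with hLC_def
  have hLC0 : 0 ≤ LC := mul_nonneg hK1nn (by linarith)
  have hDG_bd : ∀ t, 0 < t → ∀ x, |DG t x| ≤ LC := by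
    intro t ht x
    apply abs_tsum_k_le hs hnn (by linarith)
    intro j
    have h1 := hp_bd t ht x; have h2 := hp_bd t ht (x + j)
    calc |wt t x / w t x - wt t (x + j) / w t (x + j)|
        ≤ |wt t x / w t x| + |wt t (x + j) / w t (x + j)| := abs_sub _ _
      _ ≤ 2 * P := by linarith
  have hGLip : ∀ s t : ℝ, 0 < s → 0 < t → ∀ x, |G s x - G t x| ≤ LC * |s - t| := by
    intro s t hs' ht' x
    have := Convex.norm_image_sub_le_of_norm_hasDerivWithin_le
      (f := fun r => G r x) (f' := fun r => DG r x) (s := Ioi (0:ℝ))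
      (fun r hr => (hGder r hr x).hasDerivWithinAt)
      (fun r hr => by rw [Real.norm_eq_abs]; exact hDG_bd r hr x)
      (convex_Ioi 0) ht' hs'
    simpa [Real.norm_eq_abs] using this
  set m : ℝ → ℝ := fun s => ⨆ x : ℤ, G s x with hm_def
  have hbdd : ∀ s, 0 < s → BddAbove (range (fun x => G s x)) := by
    intro s hs'
    exact ⟨K1 * R, by rintro z ⟨x, rfl⟩; exact le_of_abs_le (hGbd s hs' x)⟩
  have hmle : ∀ s, 0 < s → ∀ x, G s x ≤ m s := fun s hs' x => le_ciSup (hbdd s hs') x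
  have hmub : ∀ s, 0 < s → m s ≤ K1 * R := fun s hs' =>
    ciSup_le (fun x => le_of_abs_le (hGbd s hs' x))
  have hmdiff : ∀ s t : ℝ, 0 < s → 0 < t → m s - m t ≤ LC * |s - t| := by
    intro s t hs' ht'
    rw [sub_le_iff_le_add]
    apply ciSup_le
    intro x
    have h1 := hGLip s t hs' ht' x
    have h2 := hmle t ht' x
    have := abs_le.mp h1
    linarith [this.2]
  have hmabs : ∀ s t : ℝ, 0 < s → 0 < t → |m s - m t| ≤ LC * |s - t| := by
    intro s t hs' ht'
    rw [abs_le]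
    constructor
    · have := hmdiff t s ht' hs'
      rw [abs_sub_comm] at this
      linarith
    · exact hmdiff s t hs' ht'
  have hmcont : ContinuousOn m (Ioi 0) := by
    apply LipschitzOnWith.continuousOn (K := Real.toNNReal LC)
    apply LipschitzOnWith.of_dist_le_mul
    intro a ha b hb
    rw [Real.dist_eq, Real.dist_eq]
    calc |m a - m b| ≤ LC * |a - b| := hmabs a b ha hb
      _ = (Real.toNNReal LC : ℝ) * |a - b| := by rw [Real.coe_toNNReal LC hLC0]
  -- CD rewriting
  have hnegLop : ∀ s, 0 < s → ∀ x, -Lop k (fun y => v s y) x = G s x := by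
    intro s hs' x
    rw [Lop, hG_def, ← tsum_neg]
    exact tsum_congr fun j => by ring
  have hBddv : ∀ s, 0 < s → BddFun (fun y => v s y) := fun s hs' => ⟨Cv, hvbd s hs'⟩
  -- p = B identity
  have hpB : ∀ s, 0 < s → ∀ y, wt s y / w s y =
      ∑' l : ℤ, k l * (Real.exp (v s (y + l) - v s y) - 1) := by
    intro s hs' y
    rw [hw s hs' y, Lop, ← tsum_div_const]
    apply tsum_congr
    intro l
    have h1 : 0 < w s (y + l) := lt_of_lt_of_le hδ (hlb s hs' (y + l))
    have h2 : 0 < w s y := lt_of_lt_of_le hδ (hlb s hs' y)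
    rw [hv_def]
    simp only
    rw [Real.exp_sub, Real.exp_log h1, Real.exp_log h2]
    field_simp
  have hDG_eq : ∀ s, 0 < s → ∀ x, DG s x =
      (∑' l : ℤ, k l * Real.exp (v s (x + l) - v s x) * (G s (x + l) - G s x)) -
        2 * Psi2 k (fun y => v s y) x := by
    intro s hs' x
    rw [hDG_def]
    simp only
    have h1 : (fun j : ℤ => k j * (wt s x / w s x - wt s (x + j) / w s (x + j))) =
        fun j : ℤ => k j * ((∑' l : ℤ, k l * (Real.exp (v s (x + l) - v s x) - 1)) -
          ∑' l : ℤ, k l * (Real.exp (v s (x + j + l) - v s (x + j)) - 1)) := by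
      funext j
      rw [hpB s hs' x, hpB s hs' (x + j)]
    rw [h1, step3 hs hnn (fun y z => hosc s hs' y z) x]
  -- pointwise differential inequality at near-argmax points
  set CK : ℝ := K1 * Real.exp R with hCK_def
  have hCK0 : 0 ≤ CK := mul_nonneg hK1nn (Real.exp_pos _).le
  have hdiff_ineq : ∀ s, 0 < s → ∀ x, 0 < G s x → ∀ κ, 0 ≤ κ → m s - G s x ≤ κ →
      DG s x ≤ CK * κ - 2 * F (G s x) := by
    intro s hs' x hGpos κ hκ0 hκ
    have hker : (∑' l : ℤ, k l * Real.exp (v s (x + l) - v s x) * (G s (x + l) - G s x)) ≤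
        K1 * (Real.exp R * κ) := by
      have hterm : ∀ l : ℤ, k l * Real.exp (v s (x + l) - v s x) * (G s (x + l) - G s x) ≤
          k l * (Real.exp R * κ) := by
        intro l
        rcases le_or_gt (G s (x + l) - G s x) 0 with hneg | hpos
        · have hl : k l * Real.exp (v s (x + l) - v s x) * (G s (x + l) - G s x) ≤ 0 :=
            mul_nonpos_of_nonneg_of_nonpos
              (mul_nonneg (hnn l) (Real.exp_pos _).le) hneg
          exact le_trans hl (mul_nonneg (hnn l) (mul_nonneg (Real.exp_pos _).le hκ0))
        · have hd1 : G s (x + l) - G s x ≤ κ := by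
            have := hmle s hs' (x + l); linarith
          have he : Real.exp (v s (x + l) - v s x) ≤ Real.exp R :=
            Real.exp_le_exp.mpr (le_trans (le_abs_self _) (hosc s hs' (x + l) x))
          calc k l * Real.exp (v s (x + l) - v s x) * (G s (x + l) - G s x)
              ≤ k l * Real.exp R * κ := by
                apply mul_le_mul
                · exact mul_le_mul_of_nonneg_left he (hnn l)
                · exact hd1
                · exact hpos.le
                · exact mul_nonneg (hnn l) (Real.exp_pos _).le
            _ = k l * (Real.exp R * κ) := by ring
      have hsumL : Summable fun l : ℤ =>
          k l * (Real.exp (v s (x + l) - v s x) * (G s (x + l) - G s x)) := by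
        apply summable_k_mul hs hnn (C := Real.exp R * (2 * (K1 * R)))
        intro l
        rw [abs_mul, abs_of_pos (Real.exp_pos _)]
        apply mul_le_mul
        · exact Real.exp_le_exp.mpr (le_trans (le_abs_self _) (hosc s hs' (x + l) x))
        · calc |G s (x + l) - G s x| ≤ |G s (x + l)| + |G s x| := abs_sub _ _
            _ ≤ 2 * (K1 * R) := by
                have := hGbd s hs' (x + l); have := hGbd s hs' x; linarith
        · exact abs_nonneg _
        · exact (Real.exp_pos _).le
      calc (∑' l : ℤ, k l * Real.exp (v s (x + l) - v s x) * (G s (x + l) - G s x))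
          = ∑' l : ℤ, k l * (Real.exp (v s (x + l) - v s x) * (G s (x + l) - G s x)) :=
            tsum_congr fun l => by ring
        _ ≤ ∑' l : ℤ, k l * (Real.exp R * κ) := by
            apply Summable.tsum_le_tsum _ hsumL (hs.mul_right _)
            intro l
            calc k l * (Real.exp (v s (x + l) - v s x) * (G s (x + l) - G s x))
                = k l * Real.exp (v s (x + l) - v s x) * (G s (x + l) - G s x) := by ring
              _ ≤ k l * (Real.exp R * κ) := hterm l
        _ = K1 * (Real.exp R * κ) := tsum_mul_right
    have hCDap : F (G s x) ≤ Psi2 k (fun y => v s y) x := by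
      have h0 : 0 ≤ -Lop k (fun y => v s y) x := by rw [hnegLop s hs' x]; exact hGpos.le
      have := hCD (fun y => v s y) (hBddv s hs') x h0
      rwa [hnegLop s hs' x] at this
    rw [hDG_eq s hs' x]
    have : K1 * (Real.exp R * κ) = CK * κ := by rw [hCK_def]; ring
    linarith
  -- slope estimate on m
  have hslope : ∀ t, 0 < t → 0 < m t → ∀ ε', 0 < ε' →
      ∀ᶠ z in nhdsWithin t (Ioi t), slope m t z < -(2 * F (m t)) + ε' := by
    intro t ht hmt ε' hε'
    have hFc : ContinuousWithinAt F (Ici 0) (m t) := hF.1 (m t) hmt.le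
    obtain ⟨ρ, hρ0, hρ⟩ := Metric.continuousWithinAt_iff.mp hFc (ε' / 4) (by linarith)
    have htend : Tendsto (fun z : ℝ => z - t) (nhdsWithin t (Ioi t)) (𝓝 0) := by
      have hc : Continuous fun z : ℝ => z - t := continuous_id.sub continuous_const
      exact (hc.tendsto' t 0 (by simp)).mono_left nhdsWithin_le_nhds
    have hκtend : Tendsto (fun z : ℝ => (z - t) ^ 2 + 2 * LC * (z - t))
        (nhdsWithin t (Ioi t)) (𝓝 0) := by
      have hc : Continuous fun z : ℝ => (z - t) ^ 2 + 2 * LC * (z - t) :=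
        ((continuous_id.sub continuous_const).pow 2).add
          (continuous_const.mul (continuous_id.sub continuous_const))
      exact (hc.tendsto' t 0 (by norm_num)).mono_left nhdsWithin_le_nhds
    have hrtend : Tendsto (fun z : ℝ => ((z - t) ^ 2 + 2 * LC * (z - t)) + LC * (z - t))
        (nhdsWithin t (Ioi t)) (𝓝 0) := by
      have hc : Continuous fun z : ℝ => ((z - t) ^ 2 + 2 * LC * (z - t)) + LC * (z - t) :=
        (((continuous_id.sub continuous_const).pow 2).add
          (continuous_const.mul (continuous_id.sub continuous_const))).add
          (continuous_const.mul (continuous_id.sub continuous_const))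
      exact (hc.tendsto' t 0 (by norm_num)).mono_left nhdsWithin_le_nhds
    have ev1 : ∀ᶠ z in nhdsWithin t (Ioi t),
        ((z - t) ^ 2 + 2 * LC * (z - t)) + LC * (z - t) < min ρ (m t / 2) :=
      hrtend.eventually (gt_mem_nhds (lt_min hρ0 (by linarith)))
    have ev2 : ∀ᶠ z in nhdsWithin t (Ioi t),
        CK * ((z - t) ^ 2 + 2 * LC * (z - t)) < ε' / 4 := by
      have h2 : Tendsto (fun z : ℝ => CK * ((z - t) ^ 2 + 2 * LC * (z - t)))
          (nhdsWithin t (Ioi t)) (𝓝 0) := by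
        simpa using hκtend.const_mul CK
      exact h2.eventually (gt_mem_nhds (by linarith))
    have ev3 : ∀ᶠ z in nhdsWithin t (Ioi t), z - t < ε' / 4 :=
      htend.eventually (gt_mem_nhds (by linarith))
    have ev4 : ∀ᶠ z in nhdsWithin t (Ioi t), z ∈ Ioi t := self_mem_nhdsWithin
    filter_upwards [ev1, ev2, ev3, ev4] with z h1 h2 h3 h4
    have hh : 0 < z - t := sub_pos.mpr h4
    have hz0 : 0 < z := ht.trans h4
    have hκ'0 : 0 ≤ (z - t) ^ 2 + 2 * LC * (z - t) := by nlinarith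
    have hlt : m z - (z - t) ^ 2 < m z := by nlinarith
    obtain ⟨xs, hxs⟩ : ∃ x : ℤ, m z - (z - t) ^ 2 < G z x := by
      apply exists_lt_of_lt_ciSup
      exact hlt
    have hcont : ContinuousOn (fun r => G r xs) (Icc t z) := fun r hr =>
      (hGder r (lt_of_lt_of_le ht hr.1) xs).continuousAt.continuousWithinAt
    obtain ⟨ξ, hξmem, hξeq⟩ := exists_hasDerivAt_eq_slope (fun r => G r xs)
      (fun r => DG r xs) h4 hcont (fun r hr => hGder r (ht.trans hr.1) xs)
    have hξ0 : 0 < ξ := ht.trans hξmem.1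
    have hξz : |ξ - z| ≤ z - t := by
      rw [abs_le]; constructor <;> [linarith [hξmem.1, hξmem.2]; linarith [hξmem.1, hξmem.2]]
    have hξt : |t - ξ| ≤ z - t := by
      rw [abs_le]; constructor <;> [linarith [hξmem.1, hξmem.2]; linarith [hξmem.1, hξmem.2]]
    have a1 : G ξ xs ≥ G z xs - LC * (z - t) := by
      have := abs_le.mp (hGLip ξ z hξ0 hz0 xs)
      have hb : LC * |ξ - z| ≤ LC * (z - t) := mul_le_mul_of_nonneg_left hξz hLC0
      linarith [this.1, this.2]
    have a3 : m ξ ≤ m z + LC * (z - t) := by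
      have := hmdiff ξ z hξ0 hz0
      have hb : LC * |ξ - z| ≤ LC * (z - t) := mul_le_mul_of_nonneg_left hξz hLC0
      linarith
    have a4 : m t ≤ m ξ + LC * (z - t) := by
      have := hmdiff t ξ ht hξ0
      have hb : LC * |t - ξ| ≤ LC * (z - t) := mul_le_mul_of_nonneg_left hξt hLC0
      linarith
    have hnear : m ξ - G ξ xs ≤ (z - t) ^ 2 + 2 * LC * (z - t) := by nlinarith
    have hGlow : m t - (((z - t) ^ 2 + 2 * LC * (z - t)) + LC * (z - t)) ≤ G ξ xs := by
      nlinarith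
    have hGpos : 0 < G ξ xs := by
      have hmin := lt_min_iff.mp h1
      linarith [hmin.2]
    have hDGle := hdiff_ineq ξ hξ0 xs hGpos ((z - t) ^ 2 + 2 * LC * (z - t)) hκ'0 hnear
    have hFG : F (m t) - ε' / 4 ≤ F (G ξ xs) := by
      rcases le_or_gt (m t) (G ξ xs) with hc | hc
      · linarith [F_mono hF hmt hc]
      · have hmin := lt_min_iff.mp h1
        have hdist : dist (G ξ xs) (m t) < ρ := by
          rw [Real.dist_eq, abs_of_nonpos (by linarith)]
          linarith [hmin.1]
        have := hρ (mem_Ici.mpr hGpos.le) hdist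
        rw [Real.dist_eq] at this
        have := abs_le.mp this.le
        linarith [this.1]
    have hGts : G z xs - G t xs = DG ξ xs * (z - t) := by
      rw [hξeq]; field_simp
    have hGtm : G t xs ≤ m t := hmle t ht xs
    rw [slope_def_field, div_lt_iff₀ hh]
    have hstep : m z - m t ≤ DG ξ xs * (z - t) + (z - t) ^ 2 := by
      nlinarith
    have hDGmul : DG ξ xs * (z - t) ≤
        (CK * ((z - t) ^ 2 + 2 * LC * (z - t)) - 2 * F (G ξ xs)) * (z - t) :=
      mul_le_mul_of_nonneg_right hDGle hh.le
    have hFmul : (- 2 * F (G ξ xs)) * (z - t) ≤ (- 2 * (F (m t) - ε' / 4)) * (z - t) := by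
      apply mul_le_mul_of_nonneg_right _ hh.le
      linarith
    nlinarith
  -- comparison with φ
  intro t ht x
  -- entry point a
  obtain ⟨a, ha_mem, ha_phi⟩ : ∃ a, a ∈ Ioo 0 t ∧ K1 * R ≤ φ a := by
    have h1 : ∀ᶠ s in nhdsWithin 0 (Ioi 0), K1 * R ≤ φ s := hφblow.eventually_ge_atTop _
    have h2 : Ioo (0:ℝ) t ∈ nhdsWithin 0 (Ioi 0) := Ioo_mem_nhdsGT_of_mem ⟨le_rfl, ht⟩
    obtain ⟨a, ha1, ha2⟩ := (h1.and (eventually_of_mem h2 (fun y hy => hy))).exists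
    exact ⟨a, ha2, ha1⟩
  have ha0 : 0 < a := ha_mem.1
  have hat : a < t := ha_mem.2
  have hma : m a ≤ φ a := le_trans (hmub a ha0) ha_phi
  have hcomp : ∀ ε, 0 < ε → m t ≤ φ t + ε * (t - a) := by
    intro ε hε
    have := image_le_of_liminf_slope_right_lt_deriv_boundary'
      (f := m) (f' := fun s => if 0 < m s then -(2 * F (m s)) else LC + 1)
      (a := a) (b := t)
      (B := fun s => φ s + ε * (s - a)) (B' := fun s => -(2 * F (φ s)) + ε)
      (hmcont.mono (fun z hz => lt_of_lt_of_le ha0 hz.1))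
      ?_ (by simpa using hma) ?_ ?_ ?_
    · exact this (right_mem_Icc.mpr hat.le)
    · -- slope condition
      intro z hz r hr
      replace hr : (if 0 < m z then -(2 * F (m z)) else LC + 1) < r := hr
      by_cases hmz : 0 < m z
      · rw [if_pos hmz] at hr
        have hz0 : 0 < z := lt_of_lt_of_le ha0 hz.1
        have hev := hslope z hz0 hmz (r - (-(2 * F (m z)))) (by linarith)
        apply Eventually.frequently
        filter_upwards [hev] with y hy
        linarith
      · rw [if_neg hmz] at hr
        apply Eventually.frequently
        filter_upwards [self_mem_nhdsWithin] with y hy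
        have hz0 : 0 < z := lt_of_lt_of_le ha0 hz.1
        have hy0 : 0 < y := hz0.trans hy
        have hyz : 0 < y - z := sub_pos.mpr hy
        rw [slope_def_field, div_lt_iff₀ hyz]
        have h1 : m y - m z ≤ LC * |y - z| := le_trans (le_abs_self _) (hmabs y z hy0 hz0)
        rw [abs_of_pos hyz] at h1
        nlinarith
    · -- continuity of B
      apply ContinuousOn.add
      · exact fun z hz => (hφode z (lt_of_lt_of_le ha0 hz.1)).continuousAt.continuousWithinAt
      · exact (continuous_const.mul (continuous_id.sub continuous_const)).continuousOn
    · -- derivative of B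
      intro z hz
      have hz0 : 0 < z := lt_of_lt_of_le ha0 hz.1
      have h1 : HasDerivWithinAt φ (-(2 * F (φ z))) (Ici z) z :=
        (hφode z hz0).hasDerivWithinAt
      have h2 : HasDerivWithinAt (fun s => ε * (s - a)) ε (Ici z) z := by
        simpa using (((hasDerivWithinAt_id z (Ici z)).sub_const a).const_mul ε)
      exact h1.add h2
    · -- strict inequality at contact points
      intro z hz hcontact
      replace hcontact : m z = φ z + ε * (z - a) := hcontact
      have hz0 : 0 < z := lt_of_lt_of_le ha0 hz.1
      have hφz : 0 < φ z := hφpos z hz0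
      have hmz : 0 < m z := by
        rw [hcontact]
        have : 0 ≤ ε * (z - a) := mul_nonneg hε.le (by linarith [hz.1])
        linarith
      show (if 0 < m z then -(2 * F (m z)) else LC + 1) < -(2 * F (φ z)) + ε
      rw [if_pos hmz]
      have hFle : F (φ z) ≤ F (m z) := by
        apply F_mono hF hφz
        rw [hcontact]
        have : 0 ≤ ε * (z - a) := mul_nonneg hε.le (by linarith [hz.1])
        linarith
      linarith
  have hmφ : m t ≤ φ t := by
    by_contra hcon
    push_neg at hcon
    have hta : 0 < t - a := by linarith
    have hq : 0 < (m t - φ t) / (2 * (t - a)) := by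
      apply div_pos <;> linarith
    have := hcomp ((m t - φ t) / (2 * (t - a))) hq
    have h2 : (m t - φ t) / (2 * (t - a)) * (t - a) = (m t - φ t) / 2 := by
      field_simp
    rw [h2] at this
    linarith
  exact le_trans (hmle t ht x) hmφ

section H
variable {k : ℤ → ℝ} {u ut : ℝ → ℤ → ℝ} {M : ℝ}

lemma ut_ge (hk : IsKernel k)
    (hupos : ∀ t, 0 ≤ t → ∀ x, 0 < u t x) (hM : ∀ t, 0 ≤ t → ∀ x, u t x ≤ M)
    (hheat : ∀ t, 0 < t → ∀ x, ut t x = Lop k (u t) x)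
    {s : ℝ} (hs : 0 < s) (y : ℤ) (j' : ℤ) :
    k j' * u s (y + j') - (∑' i : ℤ, k i) * u s y ≤ ut s y := by
  have hM0 : 0 < M := lt_of_lt_of_le (hupos s hs.le y) (hM s hs.le y)
  have hsum_u : Summable fun l : ℤ => k l * u s (y + l) := by
    apply summable_k_mul hk.summable hk.nonneg (C := M)
    intro l
    rw [abs_of_pos (hupos s hs.le (y + l))]
    exact hM s hs.le (y + l)
  have hsum_c : Summable fun l : ℤ => k l * u s y := hk.summable.mul_right _
  rw [hheat s hs y, Lop]
  have hsplit : (∑' l : ℤ, k l * (u s (y + l) - u s y)) =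
      (∑' l : ℤ, k l * u s (y + l)) - (∑' i : ℤ, k i) * u s y := by
    rw [← tsum_mul_right, ← Summable.tsum_sub hsum_u hsum_c]
    exact tsum_congr fun l => by ring
  rw [hsplit]
  have h1 : k j' * u s (y + j') ≤ ∑' l : ℤ, k l * u s (y + l) := by
    apply Summable.le_tsum hsum_u
    intro l _
    exact mul_nonneg (hk.nonneg l) (hupos s hs.le (y + l)).le
  linarith

lemma exp_mul_mono (hk : IsKernel k)
    (hupos : ∀ t, 0 ≤ t → ∀ x, 0 < u t x) (hM : ∀ t, 0 ≤ t → ∀ x, u t x ≤ M)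
    (huderiv : ∀ x : ℤ, ∀ t, 0 < t → HasDerivAt (fun s => u s x) (ut t x) t)
    (hheat : ∀ t, 0 < t → ∀ x, ut t x = Lop k (u t) x)
    (y : ℤ) {s t : ℝ} (hs : 0 < s) (hst : s ≤ t) :
    Real.exp ((∑' i : ℤ, k i) * s) * u s y ≤ Real.exp ((∑' i : ℤ, k i) * t) * u t y := by
  set K1 : ℝ := ∑' i : ℤ, k i with hK1
  apply le_self_of_deriv_nonneg hst
    (f' := fun r => Real.exp (K1 * r) * (K1 * u r y + ut r y))
  · intro r hr
    have hr0 : 0 < r := lt_of_lt_of_le hs hr.1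
    have h1 : HasDerivAt (fun r : ℝ => Real.exp (K1 * r)) (K1 * Real.exp (K1 * r)) r := by
      have := ((hasDerivAt_id r).const_mul K1).exp
      simpa [mul_comm] using this
    have h2 := h1.mul (huderiv y r hr0)
    exact h2.congr_deriv (by ring)
  · intro r hr
    have hr0 : 0 < r := lt_of_lt_of_le hs hr.1
    have h3 : -K1 * u r y ≤ ut r y := by
      have h4 := ut_ge hk hupos hM hheat hr0 y 0
      rw [hk.zero_at_zero] at h4
      simp at h4
      rw [hK1]
      linarith
    have h5 : 0 ≤ K1 * u r y + ut r y := by rw [hK1] at *; linarith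
    positivity

lemma harnack_s1 (hk : IsKernel k)
    (hupos : ∀ t, 0 ≤ t → ∀ x, 0 < u t x) (hM : ∀ t, 0 ≤ t → ∀ x, u t x ≤ M)
    (huderiv : ∀ x : ℤ, ∀ t, 0 < t → HasDerivAt (fun s => u s x) (ut t x) t)
    (hheat : ∀ t, 0 < t → ∀ x, ut t x = Lop k (u t) x)
    {t : ℝ} (ht : 0 < t) (x j : ℤ) :
    t / 2 * u (t / 2) x * Real.exp (-((∑' i : ℤ, k i) * t)) * k j ≤ u t (x + j) := by
  set K1 : ℝ := ∑' i : ℤ, k i with hK1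
  have hK1nn : 0 ≤ K1 := tsum_nonneg hk.nonneg
  have ht2 : 0 < t / 2 := by linarith
  set c' : ℝ := k j * (Real.exp (K1 * (t / 2)) * u (t / 2) x) with hc'
  have hc'nn : 0 ≤ c' :=
    mul_nonneg (hk.nonneg j) (mul_nonneg (Real.exp_pos _).le (hupos _ ht2.le x).le)
  have hkey : Real.exp (K1 * (t / 2)) * u (t / 2) (x + j) - c' * (t / 2) ≤
      Real.exp (K1 * t) * u t (x + j) - c' * t := by
    apply le_self_of_deriv_nonneg (f := fun r => Real.exp (K1 * r) * u r (x + j) - c' * r)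
      (f' := fun r => Real.exp (K1 * r) * (K1 * u r (x + j) + ut r (x + j)) - c')
      (by linarith)
    · intro r hr
      have hr0 : 0 < r := lt_of_lt_of_le ht2 hr.1
      have h1 : HasDerivAt (fun r : ℝ => Real.exp (K1 * r)) (K1 * Real.exp (K1 * r)) r := by
        have := ((hasDerivAt_id r).const_mul K1).exp
        simpa [mul_comm] using this
      have h2 := (h1.mul (huderiv (x + j) r hr0)).sub ((hasDerivAt_id r).const_mul c')
      exact h2.congr_deriv (by ring)
    · intro r hr
      have hr0 : 0 < r := lt_of_lt_of_le ht2 hr.1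
      have h3 := ut_ge hk hupos hM hheat hr0 (x + j) (-j)
      rw [hk.symm j] at h3
      have hxj : x + j + -j = x := by ring
      rw [hxj] at h3
      have h4 : Real.exp (K1 * (t / 2)) * u (t / 2) x ≤ Real.exp (K1 * r) * u r x :=
        exp_mul_mono hk hupos hM huderiv hheat x ht2 hr.1
      have h5 : k j * u r x ≤ K1 * u r (x + j) + ut r (x + j) := by
        rw [hK1]
        rw [← hK1] at h3
        linarith
      have h6 : Real.exp (K1 * r) * (k j * u r x) ≤
          Real.exp (K1 * r) * (K1 * u r (x + j) + ut r (x + j)) :=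
        mul_le_mul_of_nonneg_left h5 (Real.exp_pos _).le
      have h7 : c' ≤ Real.exp (K1 * r) * (k j * u r x) := by
        rw [hc']
        have h8 := mul_le_mul_of_nonneg_left h4 (hk.nonneg j)
        calc k j * (Real.exp (K1 * (t / 2)) * u (t / 2) x)
            ≤ k j * (Real.exp (K1 * r) * u r x) := h8
          _ = Real.exp (K1 * r) * (k j * u r x) := by ring
      linarith
  have hpos : 0 ≤ Real.exp (K1 * (t / 2)) * u (t / 2) (x + j) :=
    mul_nonneg (Real.exp_pos _).le (hupos _ ht2.le (x + j)).le
  have hmain : c' * (t / 2) ≤ Real.exp (K1 * t) * u t (x + j) := by linarith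
  have hfin : t / 2 * u (t / 2) x * Real.exp (-(K1 * t)) * k j ≤
      Real.exp (-(K1 * t)) * (c' * (t / 2)) := by
    rw [hc']
    have hexp1 : (1:ℝ) ≤ Real.exp (K1 * (t / 2)) := by
      rw [← Real.exp_zero]
      apply Real.exp_le_exp.mpr
      positivity
    have hrest : 0 ≤ Real.exp (-(K1 * t)) * (k j * u (t / 2) x * (t / 2)) := by
      have h9 := hk.nonneg j
      have h10 := (hupos _ ht2.le x).le
      positivity
    nlinarith [hrest, hexp1]
  calc t / 2 * u (t / 2) x * Real.exp (-(K1 * t)) * k j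
      ≤ Real.exp (-(K1 * t)) * (c' * (t / 2)) := hfin
    _ ≤ Real.exp (-(K1 * t)) * (Real.exp (K1 * t) * u t (x + j)) :=
        mul_le_mul_of_nonneg_left hmain (Real.exp_pos _).le
    _ = u t (x + j) := by
        rw [← mul_assoc, ← Real.exp_add]
        simp

lemma key1 (hk : IsKernel k) {α : ℝ} (hα : 0 < α)
    (hmom : Summable fun n : ℕ => k (n : ℤ) * (n : ℝ) ^ α)
    (hupos : ∀ t, 0 ≤ t → ∀ x, 0 < u t x) (hM : ∀ t, 0 ≤ t → ∀ x, u t x ≤ M)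
    (huderiv : ∀ x : ℤ, ∀ t, 0 < t → HasDerivAt (fun s => u s x) (ut t x) t)
    (hheat : ∀ t, 0 < t → ∀ x, ut t x = Lop k (u t) x)
    {t : ℝ} (ht : 0 < t) (x : ℤ) :
    Summable fun j : ℤ => k j * |Real.log (u t (x + j))| := by
  set K1 : ℝ := ∑' i : ℤ, k i with hK1
  have ht2 : 0 < t / 2 := by linarith
  set c : ℝ := t / 2 * u (t / 2) x * Real.exp (-(K1 * t)) with hc
  have hcpos : 0 < c := by
    have := hupos _ ht2.le x
    positivity
  have hM0 : 0 < M := lt_of_lt_of_le (hupos t ht.le x) (hM t ht.le x)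
  set C3 : ℝ := |Real.log M| + Real.log M + |Real.log c| with hC3
  have hbd : ∀ j : ℤ, k j * |Real.log (u t (x + j))| ≤
      k j * C3 + k j * max 0 (-Real.log (k j)) := by
    intro j
    rcases eq_or_lt_of_le (hk.nonneg j) with h0 | hkj
    · rw [← h0]; simp
    · have hupos' := hupos t ht.le (x + j)
      have hz_ub : Real.log (u t (x + j)) ≤ Real.log M := Real.log_le_log hupos' (hM t ht.le _)
      have hhar := harnack_s1 hk hupos hM huderiv hheat ht x j
      rw [← hK1] at hhar
      have hz_lb : Real.log c + Real.log (k j) ≤ Real.log (u t (x + j)) := by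
        rw [← Real.log_mul hcpos.ne' hkj.ne']
        exact Real.log_le_log (by positivity) hhar
      have habs : |Real.log (u t (x + j))| ≤ |Real.log M| +
          (Real.log M - Real.log (u t (x + j))) := by
        have hML : Real.log M ≤ |Real.log M| := le_abs_self _
        have hML2 : -Real.log M ≤ |Real.log M| := by rw [← abs_neg]; exact le_abs_self _
        rcases abs_cases (Real.log (u t (x + j))) with ⟨he, _⟩ | ⟨he, _⟩ <;> rw [he] <;> linarith
      have hrem : Real.log M - Real.log (u t (x + j)) ≤
          Real.log M + |Real.log c| + max 0 (-Real.log (k j)) := by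
        have h1 : -Real.log c ≤ |Real.log c| := by rw [← abs_neg]; exact le_abs_self _
        have h2 : -Real.log (k j) ≤ max 0 (-Real.log (k j)) := le_max_right _ _
        linarith
      have hfull : |Real.log (u t (x + j))| ≤ C3 + max 0 (-Real.log (k j)) := by
        rw [hC3]; linarith
      calc k j * |Real.log (u t (x + j))| ≤ k j * (C3 + max 0 (-Real.log (k j))) :=
            mul_le_mul_of_nonneg_left hfull hkj.le
        _ = k j * C3 + k j * max 0 (-Real.log (k j)) := by ring
  apply Summable.of_nonneg_of_le
    (fun j => mul_nonneg (hk.nonneg j) (abs_nonneg _)) hbd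
  exact (hk.summable.mul_right C3).add (summable_k_log hk.nonneg hk.symm hα hmom)



end H
end helpers
end liyau_aux

/-- Li-Yau inequality: under `CD_Υ(0,F)` (with `g(x)=F(x)/x` superadditive) and a finite
`α`-th moment, every bounded positive solution `u` of the heat equation `∂_t u = Lu`
satisfies, with `v = log u` and `φ` the relaxation function of `2F`:
(1) `v(t,x+·) ∈ ℓ¹_k(ℤ)`, (2) `−Lv(t,x) ≤ φ(t)`, (3) `∂_t v(t,x) ≥ Ψ_Υ(v)(t,x) − φ(t)`. -/
theorem li_yau (k : ℤ → ℝ) (hk : IsKernel k) (α : ℝ) (hα : 0 < α)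
    (hmom : Summable fun n : ℕ => k (n : ℤ) * (n : ℝ) ^ α)
    (F : ℝ → ℝ) (hF : IsCDFunction F) (hCD : CDUps k F)
    (hsuper : ∀ x y : ℝ, 0 < x → 0 < y → F x / x + F y / y ≤ F (x + y) / (x + y))
    (φ : ℝ → ℝ) (hφpos : ∀ t, 0 < t → 0 < φ t)
    (hφode : ∀ t, 0 < t → HasDerivAt φ (-(2 * F (φ t))) t)
    (hφblow : Tendsto φ (nhdsWithin 0 (Ioi 0)) atTop)
    (u : ℝ → ℤ → ℝ) (ut : ℝ → ℤ → ℝ)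
    (hupos : ∀ t, 0 ≤ t → ∀ x, 0 < u t x)
    (hubdd : ∃ M : ℝ, ∀ t, 0 ≤ t → ∀ x, u t x ≤ M)
    (huderiv : ∀ x : ℤ, ∀ t, 0 < t → HasDerivAt (fun s => u s x) (ut t x) t)
    (hutcont : ∀ x : ℤ, ContinuousOn (fun t => ut t x) (Ioi 0))
    (hheat : ∀ t, 0 < t → ∀ x, ut t x = Lop k (u t) x) :
    ∀ t, 0 < t → ∀ x : ℤ,
      (Summable fun j : ℤ => k j * |Real.log (u t (x + j))|) ∧
      -Lop k (fun y => Real.log (u t y)) x ≤ φ t ∧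
      PsiUps k (fun y => Real.log (u t y)) x - φ t ≤ ut t x / u t x := by
  obtain ⟨M, hM⟩ := hubdd
  intro t ht x
  have hpart1 : Summable fun j : ℤ => k j * |Real.log (u t (x + j))| :=
    key1 hk hα hmom hupos hM huderiv hheat ht x
  have hM0 : 0 < M := lt_of_lt_of_le (hupos t ht.le x) (hM t ht.le x)
  -- Part 2
  have habs_log : ∀ δ : ℝ, 0 < δ → δ ≤ 1 → ∀ y : ℤ,
      |Real.log (u t y + δ)| ≤ |Real.log (u t y)| + |Real.log (M + 1)| := by
    intro δ hδ hδ1 y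
    have hu := hupos t ht.le y
    have hub := hM t ht.le y
    have h1 : Real.log (u t y) ≤ Real.log (u t y + δ) :=
      Real.log_le_log hu (by linarith)
    have h2 : Real.log (u t y + δ) ≤ Real.log (M + 1) :=
      Real.log_le_log (by linarith) (by linarith)
    rcases abs_cases (Real.log (u t y + δ)) with ⟨he, _⟩ | ⟨he, _⟩
    · rw [he]
      have : Real.log (M + 1) ≤ |Real.log (M + 1)| := le_abs_self _
      have h3 : 0 ≤ |Real.log (u t y)| := abs_nonneg _
      linarith
    · rw [he]
      have h4 : -Real.log (u t y) ≤ |Real.log (u t y)| := by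
        rw [← abs_neg]; exact le_abs_self _
      have h3 : 0 ≤ |Real.log (M + 1)| := abs_nonneg _
      linarith
  have hδseq : ∀ n : ℕ, (∑' j : ℤ, k j * (Real.log (u t x + 1 / ((n : ℝ) + 1)) -
      Real.log (u t (x + j) + 1 / ((n : ℝ) + 1)))) ≤ φ t := by
    intro n
    set δ : ℝ := 1 / ((n : ℝ) + 1) with hδdef
    have hδ : 0 < δ := by positivity
    apply key2 hk hF hCD hφpos hφode hφblow (w := fun s y => u s y + δ) (wt := ut)
      (δ := δ) (M' := M + δ) hδ
      (fun s hs y => by have := hupos s hs.le y; show δ ≤ u s y + δ; linarith)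
      (fun s hs y => by have := hM s hs.le y; show u s y + δ ≤ M + δ; linarith)
      (fun y s hs => (huderiv y s hs).add_const δ)
      (fun s hs y => by
        rw [hheat s hs y, Lop, Lop]
        exact tsum_congr fun j => by ring)
      t ht x
  have hδ1 : ∀ n : ℕ, (1 : ℝ) / ((n : ℝ) + 1) ≤ 1 := by
    intro n
    rw [div_le_one (by positivity)]
    simp
  have hlim : Tendsto (fun n : ℕ => ∑' j : ℤ, k j * (Real.log (u t x + 1 / ((n : ℝ) + 1)) -
      Real.log (u t (x + j) + 1 / ((n : ℝ) + 1)))) atTop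
      (𝓝 (∑' j : ℤ, k j * (Real.log (u t x) - Real.log (u t (x + j))))) := by
    have hδ0 : Tendsto (fun n : ℕ => 1 / ((n : ℝ) + 1)) atTop (𝓝 0) :=
      tendsto_one_div_add_atTop_nhds_zero_nat
    have hlog : ∀ y : ℤ, Tendsto (fun n : ℕ => Real.log (u t y + 1 / ((n : ℝ) + 1))) atTop
        (𝓝 (Real.log (u t y))) := by
      intro y
      have h1 : Tendsto (fun n : ℕ => u t y + 1 / ((n : ℝ) + 1)) atTop (𝓝 (u t y)) := by
        have := tendsto_const_nhds (x := u t y) (f := atTop (α := ℕ)) |>.add hδ0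
        simpa using this
      exact ((Real.continuousAt_log (ne_of_gt (hupos t ht.le y))).tendsto).comp h1
    apply tendsto_tsum_of_dominated_convergence
      (bound := fun j : ℤ => k j * (|Real.log (u t x)| + 2 * |Real.log (M + 1)|) +
        k j * |Real.log (u t (x + j))|)
    · apply Summable.add
      · exact hk.summable.mul_right _
      · exact hpart1
    · intro j
      exact ((hlog x).sub (hlog (x + j))).const_mul (k j)
    · apply Filter.Eventually.of_forall
      intro n j
      have hδ : (0:ℝ) < 1 / ((n : ℝ) + 1) := by positivity
      have hb1 := habs_log _ hδ (hδ1 n) x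
      have hb2 := habs_log _ hδ (hδ1 n) (x + j)
      rw [Real.norm_eq_abs, abs_mul, abs_of_nonneg (hk.nonneg j)]
      have htri : |Real.log (u t x + 1 / ((n : ℝ) + 1)) -
          Real.log (u t (x + j) + 1 / ((n : ℝ) + 1))| ≤
          (|Real.log (u t x)| + 2 * |Real.log (M + 1)|) + |Real.log (u t (x + j))| := by
        have := abs_sub (Real.log (u t x + 1 / ((n : ℝ) + 1)))
          (Real.log (u t (x + j) + 1 / ((n : ℝ) + 1)))
        linarith
      calc k j * |Real.log (u t x + 1 / ((n : ℝ) + 1)) -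
          Real.log (u t (x + j) + 1 / ((n : ℝ) + 1))|
          ≤ k j * ((|Real.log (u t x)| + 2 * |Real.log (M + 1)|) +
            |Real.log (u t (x + j))|) := mul_le_mul_of_nonneg_left htri (hk.nonneg j)
        _ = k j * (|Real.log (u t x)| + 2 * |Real.log (M + 1)|) +
            k j * |Real.log (u t (x + j))| := by ring
  have hpart2' : (∑' j : ℤ, k j * (Real.log (u t x) - Real.log (u t (x + j)))) ≤ φ t :=
    le_of_tendsto hlim (Filter.Eventually.of_forall hδseq)
  have hLop_eq : -Lop k (fun y => Real.log (u t y)) x =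
      ∑' j : ℤ, k j * (Real.log (u t x) - Real.log (u t (x + j))) := by
    rw [Lop, ← tsum_neg]
    exact tsum_congr fun j => by ring
  have hpart2 : -Lop k (fun y => Real.log (u t y)) x ≤ φ t := by
    rw [hLop_eq]; exact hpart2'
  refine ⟨hpart1, hpart2, ?_⟩
  -- Part 3
  have hux : 0 < u t x := hupos t ht.le x
  have hsum_v : Summable fun j : ℤ => k j * (Real.log (u t (x + j)) - Real.log (u t x)) := by
    apply Summable.of_norm
    refine Summable.of_nonneg_of_le (fun j => norm_nonneg _) ?_
      (hpart1.add (hk.summable.mul_right (|Real.log (u t x)|)))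
    intro j
    rw [Real.norm_eq_abs, abs_mul, abs_of_nonneg (hk.nonneg j)]
    have h1 := abs_sub (Real.log (u t (x + j))) (Real.log (u t x))
    have h2 := mul_le_mul_of_nonneg_left h1 (hk.nonneg j)
    calc k j * |Real.log (u t (x + j)) - Real.log (u t x)|
        ≤ k j * (|Real.log (u t (x + j))| + |Real.log (u t x)|) := h2
      _ = k j * |Real.log (u t (x + j))| + k j * |Real.log (u t x)| := by ring
  have hsumu : Summable fun j : ℤ => k j * (u t (x + j) - u t x) := by
    apply summable_k_mul hk.summable hk.nonneg (C := M)
    intro j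
    have h1 := hupos t ht.le (x + j)
    have h2 := hM t ht.le (x + j)
    have h3 := hupos t ht.le x
    have h4 := hM t ht.le x
    rw [abs_le]; constructor <;> linarith
  have hexp_eq : ∀ j : ℤ, u t (x + j) / u t x =
      Real.exp (Real.log (u t (x + j)) - Real.log (u t x)) := by
    intro j
    rw [Real.exp_sub, Real.exp_log (hupos t ht.le (x + j)), Real.exp_log hux]
  have hutdiv : ut t x / u t x = ∑' j : ℤ, k j *
      (Real.exp (Real.log (u t (x + j)) - Real.log (u t x)) - 1) := by
    rw [hheat t ht x, Lop, ← tsum_div_const]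
    apply tsum_congr
    intro j
    rw [← hexp_eq j]
    field_simp
  have hsum_e : Summable fun j : ℤ => k j *
      (Real.exp (Real.log (u t (x + j)) - Real.log (u t x)) - 1) := by
    have : (fun j : ℤ => k j * (Real.exp (Real.log (u t (x + j)) - Real.log (u t x)) - 1)) =
        fun j : ℤ => (k j * (u t (x + j) - u t x)) / u t x := by
      funext j
      rw [← hexp_eq j]
      field_simp
    rw [this]
    exact hsumu.div_const _
  have hsplit : ∀ j : ℤ, k j * (Real.exp (Real.log (u t (x + j)) - Real.log (u t x)) - 1) =
      k j * Ups (Real.log (u t (x + j)) - Real.log (u t x)) +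
        k j * (Real.log (u t (x + j)) - Real.log (u t x)) := by
    intro j
    rw [Ups]
    ring
  have hsum_Ups : Summable fun j : ℤ =>
      k j * Ups (Real.log (u t (x + j)) - Real.log (u t x)) := by
    have : (fun j : ℤ => k j * Ups (Real.log (u t (x + j)) - Real.log (u t x))) =
        fun j : ℤ => k j * (Real.exp (Real.log (u t (x + j)) - Real.log (u t x)) - 1) -
          k j * (Real.log (u t (x + j)) - Real.log (u t x)) := by
      funext j
      rw [Ups]
      ring
    rw [this]
    exact hsum_e.sub hsum_v
  have hfinal : ut t x / u t x = PsiUps k (fun y => Real.log (u t y)) x +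
      Lop k (fun y => Real.log (u t y)) x := by
    rw [hutdiv, PsiUps, Lop]
    rw [← Summable.tsum_add hsum_Ups hsum_v]
    exact tsum_congr hsplit
  rw [hfinal]
  have : -φ t ≤ Lop k (fun y => Real.log (u t y)) x := by linarith
  linarith
end
end

section
/- Let k: ℤ → [0,∞) be a nontrivial kernel with k(0)=0, k(−j)=k(j) for all j ∈ ℤ and ∑_{j∈ℤ} k(j) < ∞, and let L be the operator generated by k. Let u: [0,∞) × ℤ → (0,∞) be continuously differentiable in time and such that ∑_{j∈ℤ} k(j) Υ(log u(t,x+j) − log u(t,x)) < ∞ for all t > 0 and x ∈ ℤ. Let φ: (0,∞) → [0,∞) be continuous and suppose u satisfies the differential Harnack estimate ∂_t log u(t,x) ≥ Ψ_Υ(log u(t,·))(x) − φ(t) for all (t,x) ∈ (0,∞) × ℤ. Let 0 < t₁ < t₂ and x₁, x₂ ∈ ℤ. Then for every N ∈ ℕ and every sequence of distinct points y₀, y₁, …, y_N ∈ ℤ with y₀ = x₁, y_N = x₂ and k(y_i − y_{i−1}) > 0 for all i ∈ {1,…,N}, there holds u(t₁,x₁) ≤ u(t₂,x₂) · exp( ∫_{t₁}^{t₂}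 φ(t) dt + (2N/(t₂−t₁)) ∑_{i=1}^N 1/k(y_i − y_{i−1}) ). -/
open scoped BigOperators
open Filter Set

noncomputable section

section Aux

open MeasureTheory intervalIntegral

lemma ups_nonneg (r : ℝ) : 0 ≤ Ups r := by
  have := Real.add_one_le_exp r; unfold Ups; linarith

lemma half_sq_le_ups {r : ℝ} (hr : 0 ≤ r) : r ^ 2 / 2 ≤ Ups r := by
  have := Real.quadratic_le_exp_of_nonneg hr; unfold Ups; linarith

lemma ups_continuous : Continuous Ups := by
  unfold Ups; fun_prop

/-- Monotonicity from pointwise derivatives. -/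
lemma monoOn_of_hasDerivAt {g g' : ℝ → ℝ} {s₁ s₂ : ℝ}
    (hderiv : ∀ t ∈ Set.Icc s₁ s₂, HasDerivAt g (g' t) t)
    (hnn : ∀ t ∈ Set.Ioo s₁ s₂, 0 ≤ g' t) :
    MonotoneOn g (Set.Icc s₁ s₂) := by
  apply monotoneOn_of_deriv_nonneg (convex_Icc _ _)
  · exact fun t ht => (hderiv t ht).continuousAt.continuousWithinAt
  · rw [interior_Icc]
    exact fun t ht =>
      (hderiv t (Set.Ioo_subset_Icc_self ht)).differentiableAt.differentiableWithinAt
  · rw [interior_Icc]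
    intro t ht
    rw [(hderiv t (Set.Ioo_subset_Icc_self ht)).deriv]
    exact hnn t ht

lemma intervalIntegrable_of_contOn {g : ℝ → ℝ} (hg : ContinuousOn g (Set.Ioi 0))
    {p q : ℝ} (hp : 0 < p) (hq : 0 < q) :
    IntervalIntegrable g MeasureTheory.volume p q := by
  apply (hg.mono ?_).intervalIntegrable
  intro t ht
  exact lt_of_lt_of_le (lt_min hp hq) ht.1

/-- The key single-edge Harnack step. -/
lemma edge_step (k : ℤ → ℝ) (hk : IsKernel k)
    (u vt : ℝ → ℤ → ℝ)
    (hvderiv : ∀ x : ℤ, ∀ t, 0 < t → HasDerivAt (fun s => Real.log (u s x)) (vt t x) t)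
    (hsum : ∀ t, 0 < t → ∀ x : ℤ,
      Summable fun j : ℤ => k j * Ups (Real.log (u t (x + j)) - Real.log (u t x)))
    (φ : ℝ → ℝ) (hφcont : ContinuousOn φ (Set.Ioi 0))
    (hdiff : ∀ t, 0 < t → ∀ x : ℤ,
      PsiUps k (fun y => Real.log (u t y)) x - φ t ≤ vt t x)
    (a b : ℤ) (hκ : 0 < k (a - b))
    (s₁ s₂ : ℝ) (hs₁ : 0 < s₁) (hs : s₁ < s₂) :
    Real.log (u s₁ a) ≤ Real.log (u s₂ b) + (∫ t in s₁..s₂, φ t) +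
      2 / (k (a - b) * (s₂ - s₁)) := by
  set κ := k (a - b) with hκdef
  set Δ := s₂ - s₁ with hΔdef
  have hΔ : 0 < Δ := by rw [hΔdef]; linarith
  set c := 2 / (κ * Δ) with hcdef
  have hc : 0 < c := by positivity
  set w : ℝ → ℝ := fun t => Real.log (u t a) - Real.log (u t b) with hwdef
  have hwcont : ContinuousOn w (Set.Ioi 0) := fun t ht =>
    ((hvderiv a t ht).continuousAt.sub (hvderiv b t ht).continuousAt).continuousWithinAt
  set f : ℝ → ℝ := fun t => Ups (w t) with hfdef
  have hfcont : ContinuousOn f (Set.Ioi 0) := ups_continuous.comp_continuousOn hwcont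
  have hfnn : ∀ t, 0 ≤ f t := fun t => ups_nonneg _
  have hIccpos : ∀ t ∈ Set.Icc s₁ s₂, (0:ℝ) < t := fun t ht => lt_of_lt_of_le hs₁ ht.1
  have hs₂ : 0 < s₂ := hs₁.trans hs
  -- derivative lower bounds
  have hva : ∀ t, 0 < t → -φ t ≤ vt t a := by
    intro t ht
    have h1 := hdiff t ht a
    have h2 : 0 ≤ PsiUps k (fun y => Real.log (u t y)) a :=
      tsum_nonneg fun j => mul_nonneg (hk.nonneg j) (ups_nonneg _)
    linarith
  have hvb : ∀ t, 0 < t → κ * f t - φ t ≤ vt t b := by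
    intro t ht
    have h1 : κ * f t ≤ PsiUps k (fun y => Real.log (u t y)) b := by
      have h := Summable.le_tsum (hsum t ht b) (a - b)
        (fun j _ => mul_nonneg (hk.nonneg j) (ups_nonneg _))
      have hab : b + (a - b) = a := by ring
      rw [hab] at h
      simp only [PsiUps]
      simpa [hfdef, hwdef, hκdef] using h
    have h2 := hdiff t ht b
    linarith
  -- the integral I
  set I : ℝ → ℝ := fun t => ∫ s in t..s₂, f s with hIdef
  have hIint : ∀ p q : ℝ, 0 < p → 0 < q → IntervalIntegrable f MeasureTheory.volume p q :=
    fun p q hp hq => intervalIntegrable_of_contOn hfcont hp hq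
  have hφint : ∀ p q : ℝ, 0 < p → 0 < q → IntervalIntegrable φ MeasureTheory.volume p q :=
    fun p q hp hq => intervalIntegrable_of_contOn hφcont hp hq
  have hIderiv : ∀ t, 0 < t → HasDerivAt I (-f t) t := by
    intro t ht
    exact intervalIntegral.integral_hasDerivAt_left (hIint t s₂ ht hs₂)
      (hfcont.stronglyMeasurableAtFilter isOpen_Ioi t ht)
      ((hfcont t ht).continuousAt (Ioi_mem_nhds ht))
  have hInn : ∀ t ∈ Set.Icc s₁ s₂, 0 ≤ I t := fun t ht =>
    intervalIntegral.integral_nonneg ht.2 (fun s _ => hfnn s)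
  have hIs₂ : I s₂ = 0 := intervalIntegral.integral_same
  have hfw : ∀ t, f t = Ups (w t) := fun t => rfl
  have hIval : ∀ t, I t = ∫ s in t..s₂, f s := fun t => rfl
  clear_value κ Δ c w f I
  -- Riccati step: find t₀
  have key : ∃ t₀ ∈ Set.Icc s₁ s₂, w t₀ ≤ c + κ * I t₀ := by
    by_contra hcon
    push_neg at hcon
    set J : ℝ → ℝ := fun t => c + κ * I t with hJdef
    have hJpos : ∀ t ∈ Set.Icc s₁ s₂, 0 < J t := by
      intro t ht
      have h1 : 0 ≤ κ * I t := mul_nonneg hκ.le (hInn t ht)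
      simp only [hJdef]; linarith
    have hJeq : ∀ t, J t = c + κ * I t := fun t => rfl
    set K : ℝ → ℝ := fun t => (J t)⁻¹ - κ / 2 * t with hKdef
    have hK1 : K s₁ = (J s₁)⁻¹ - κ / 2 * s₁ := rfl
    have hK2 : K s₂ = (J s₂)⁻¹ - κ / 2 * s₂ := rfl
    have hKderiv : ∀ t ∈ Set.Icc s₁ s₂,
        HasDerivAt K (-(κ * -f t) / (J t) ^ 2 - κ / 2) t := by
      intro t ht
      have hJd : HasDerivAt J (κ * -f t) t :=
        ((hIderiv t (hIccpos t ht)).const_mul κ).const_add c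
      have h1 : HasDerivAt (fun s => (J s)⁻¹) (-(κ * -f t) / (J t) ^ 2) t :=
        hJd.inv (hJpos t ht).ne'
      have h2 : HasDerivAt (fun s : ℝ => κ / 2 * s) (κ / 2) t := by
        simpa using (hasDerivAt_id t).const_mul (κ / 2)
      exact h1.sub h2
    clear_value J K
    have hKnn : ∀ t ∈ Set.Ioo s₁ s₂, 0 ≤ -(κ * -f t) / (J t) ^ 2 - κ / 2 := by
      intro t ht
      have ht' := Set.Ioo_subset_Icc_self ht
      have hJp := hJpos t ht'
      have hwt : J t < w t := by rw [hJeq]; exact hcon t ht'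
      have hw0 : 0 ≤ w t := le_of_lt (hJp.trans hwt)
      have hsq : (J t) ^ 2 / 2 ≤ f t := by
        have h1 : (J t) ^ 2 ≤ (w t) ^ 2 := by nlinarith
        have h2 := half_sq_le_ups hw0
        rw [hfw]
        linarith
      have hJ2 : 0 < (J t) ^ 2 := by positivity
      have he : -(κ * -f t) = κ * f t := by ring
      rw [he, sub_nonneg, le_div_iff₀ hJ2]
      nlinarith
    have hmono := monoOn_of_hasDerivAt hKderiv hKnn
    have hK12 : K s₁ ≤ K s₂ :=
      hmono (Set.left_mem_Icc.mpr hs.le) (Set.right_mem_Icc.mpr hs.le) hs.le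
    have hJs₂ : J s₂ = c := by rw [hJeq, hIs₂]; ring
    have hcinv : c⁻¹ = κ * Δ / 2 := by
      rw [hcdef, inv_div]
    have hJs₁ : 0 < (J s₁)⁻¹ := inv_pos.mpr (hJpos s₁ (Set.left_mem_Icc.mpr hs.le))
    rw [hK1, hK2, hJs₂, hcinv] at hK12
    have : κ * Δ / 2 = κ / 2 * s₂ - κ / 2 * s₁ := by rw [hΔdef]; ring
    linarith
  obtain ⟨t₀, ht₀, hkey⟩ := key
  have ht₀pos : 0 < t₀ := hIccpos t₀ ht₀
  -- step 2: log u s₁ a ≤ log u t₀ a + ∫_{s₁}^{t₀} φ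
  set g₂ : ℝ → ℝ := fun t => Real.log (u t a) + ∫ s in s₁..t, φ s with hg₂def
  have hg₂deriv : ∀ t ∈ Set.Icc s₁ s₂, HasDerivAt g₂ (vt t a + φ t) t := by
    intro t ht
    have h1 := hvderiv a t (hIccpos t ht)
    have h2 : HasDerivAt (fun r => ∫ s in s₁..r, φ s) (φ t) t :=
      intervalIntegral.integral_hasDerivAt_right (hφint s₁ t hs₁ (hIccpos t ht))
        (hφcont.stronglyMeasurableAtFilter isOpen_Ioi t (hIccpos t ht))
        ((hφcont t (hIccpos t ht)).continuousAt (Ioi_mem_nhds (hIccpos t ht)))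
    exact h1.add h2
  have hg₂nn : ∀ t ∈ Set.Ioo s₁ s₂, 0 ≤ vt t a + φ t := by
    intro t ht
    have := hva t (hIccpos t (Set.Ioo_subset_Icc_self ht))
    linarith
  have hstep2 : g₂ s₁ ≤ g₂ t₀ :=
    monoOn_of_hasDerivAt hg₂deriv hg₂nn (Set.left_mem_Icc.mpr hs.le) ht₀ ht₀.1
  -- step 3: along b
  set g₀ : ℝ → ℝ := fun s => κ * f s - φ s with hg₀def
  have hg₀cont : ContinuousOn g₀ (Set.Ioi 0) :=
    (continuousOn_const.mul hfcont).sub hφcont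
  have hg₀int : ∀ p q : ℝ, 0 < p → 0 < q → IntervalIntegrable g₀ MeasureTheory.volume p q :=
    fun p q hp hq => intervalIntegrable_of_contOn hg₀cont hp hq
  clear_value g₀
  set g₃ : ℝ → ℝ := fun t => Real.log (u t b) - ∫ s in s₁..t, g₀ s with hg₃def
  have hg₃deriv : ∀ t ∈ Set.Icc s₁ s₂, HasDerivAt g₃ (vt t b - g₀ t) t := by
    intro t ht
    have h1 := hvderiv b t (hIccpos t ht)
    have h2 : HasDerivAt (fun r => ∫ s in s₁..r, g₀ s) (g₀ t) t :=
      intervalIntegral.integral_hasDerivAt_right (hg₀int s₁ t hs₁ (hIccpos t ht))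
        (hg₀cont.stronglyMeasurableAtFilter isOpen_Ioi t (hIccpos t ht))
        ((hg₀cont t (hIccpos t ht)).continuousAt (Ioi_mem_nhds (hIccpos t ht)))
    exact h1.sub h2
  have hg₃nn : ∀ t ∈ Set.Ioo s₁ s₂, 0 ≤ vt t b - g₀ t := by
    intro t ht
    have := hvb t (hIccpos t (Set.Ioo_subset_Icc_self ht))
    simp only [hg₀def]
    linarith
  have hstep3 : g₃ t₀ ≤ g₃ s₂ :=
    monoOn_of_hasDerivAt hg₃deriv hg₃nn ht₀ (Set.right_mem_Icc.mpr hs.le) ht₀.2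
  -- arithmetic
  have hφadj : (∫ s in s₁..t₀, φ s) + ∫ s in t₀..s₂, φ s = ∫ s in s₁..s₂, φ s :=
    intervalIntegral.integral_add_adjacent_intervals (hφint s₁ t₀ hs₁ ht₀pos)
      (hφint t₀ s₂ ht₀pos hs₂)
  have hg₀adj : (∫ s in s₁..t₀, g₀ s) + ∫ s in t₀..s₂, g₀ s = ∫ s in s₁..s₂, g₀ s :=
    intervalIntegral.integral_add_adjacent_intervals (hg₀int s₁ t₀ hs₁ ht₀pos)
      (hg₀int t₀ s₂ ht₀pos hs₂)
  have hD : (∫ s in t₀..s₂, g₀ s) = κ * I t₀ - ∫ s in t₀..s₂, φ s := by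
    have h1 : (∫ s in t₀..s₂, g₀ s)
        = (∫ s in t₀..s₂, κ * f s) - ∫ s in t₀..s₂, φ s := by
      simp only [hg₀def]
      apply intervalIntegral.integral_sub
      · exact (hIint t₀ s₂ ht₀pos hs₂).const_mul κ
      · exact hφint t₀ s₂ ht₀pos hs₂
    have h2 : (∫ s in t₀..s₂, κ * f s) = κ * I t₀ := by
      rw [intervalIntegral.integral_const_mul, hIval]
    rw [h1, h2]
  have e2 : Real.log (u s₁ a) ≤ Real.log (u t₀ a) + ∫ s in s₁..t₀, φ s := by
    have h := hstep2
    simp only [hg₂def, intervalIntegral.integral_same] at h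
    linarith
  have e3 : Real.log (u t₀ b) ≤ Real.log (u s₂ b) - (∫ s in t₀..s₂, g₀ s) := by
    have h := hstep3
    simp only [hg₃def] at h
    linarith [hg₀adj]
  have hw : Real.log (u t₀ a) = w t₀ + Real.log (u t₀ b) := by
    simp [hwdef]
  linarith [e2, e3, hD, hφadj, hkey, hw]

end Aux
/-- Harnack inequality: if the positive function `u`, `C¹` in time, satisfies the differential
Harnack estimate `∂_t log u ≥ Ψ_Υ(log u) − φ(t)`, then for `0 < t₁ < t₂`, `x₁, x₂ ∈ ℤ`, and
every chain of distinct points `y₀ = x₁, …, y_N = x₂` with `k(y_i − y_{i−1}) > 0`,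
`u(t₁,x₁) ≤ u(t₂,x₂) exp(∫_{t₁}^{t₂} φ + (2N/(t₂−t₁)) ∑ 1/k(y_i − y_{i−1}))`. -/
theorem harnack (k : ℤ → ℝ) (hk : IsKernel k)
    (u : ℝ → ℤ → ℝ) (vt : ℝ → ℤ → ℝ)
    (hupos : ∀ t, 0 ≤ t → ∀ x, 0 < u t x)
    (hvderiv : ∀ x : ℤ, ∀ t, 0 < t → HasDerivAt (fun s => Real.log (u s x)) (vt t x) t)
    (hvtcont : ∀ x : ℤ, ContinuousOn (fun t => vt t x) (Ioi 0))
    (hsum : ∀ t, 0 < t → ∀ x : ℤ,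
      Summable fun j : ℤ => k j * Ups (Real.log (u t (x + j)) - Real.log (u t x)))
    (φ : ℝ → ℝ) (hφcont : ContinuousOn φ (Ioi 0)) (hφnn : ∀ t, 0 < t → 0 ≤ φ t)
    (hdiff : ∀ t, 0 < t → ∀ x : ℤ,
      PsiUps k (fun y => Real.log (u t y)) x - φ t ≤ vt t x)
    (t₁ t₂ : ℝ) (ht₁ : 0 < t₁) (ht : t₁ < t₂) (x₁ x₂ : ℤ)
    (N : ℕ) (hN : 1 ≤ N) (y : ℕ → ℤ)
    (hy0 : y 0 = x₁) (hyN : y N = x₂)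
    (hdistinct : ∀ i ≤ N, ∀ j ≤ N, y i = y j → i = j)
    (hpos : ∀ i, i < N → 0 < k (y (i + 1) - y i)) :
    u t₁ x₁ ≤ u t₂ x₂ * Real.exp ((∫ t in t₁..t₂, φ t) +
      (2 * (N : ℝ) / (t₂ - t₁)) * ∑ i ∈ Finset.range N, 1 / k (y (i + 1) - y i)) := by
  have hNpos : 0 < (N : ℝ) := by exact_mod_cast hN
  have htt : 0 < t₂ - t₁ := by linarith
  set Δ := (t₂ - t₁) / N with hΔdef
  have hΔpos : 0 < Δ := div_pos htt hNpos
  set σ : ℕ → ℝ := fun i => t₁ + i * Δ with hσdef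
  have hσ0 : σ 0 = t₁ := by simp [hσdef]
  have hσN : σ N = t₂ := by
    simp only [hσdef, hΔdef]
    field_simp
    ring
  have hσpos : ∀ i : ℕ, 0 < σ i := by
    intro i
    have h1 : 0 ≤ (i : ℝ) * Δ := mul_nonneg (Nat.cast_nonneg i) hΔpos.le
    simp only [hσdef]; linarith
  have hσsucc : ∀ i : ℕ, σ (i + 1) - σ i = Δ := by
    intro i
    simp only [hσdef]
    push_cast
    ring
  have hσlt : ∀ i : ℕ, σ i < σ (i + 1) := by
    intro i
    have := hσsucc i
    linarith
  have hφint : ∀ p q : ℝ, 0 < p → 0 < q → IntervalIntegrable φ MeasureTheory.volume p q :=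
    fun p q hp hq => intervalIntegrable_of_contOn hφcont hp hq
  clear_value Δ σ
  have main : ∀ m : ℕ, m ≤ N → Real.log (u t₁ x₁) ≤ Real.log (u (σ m) (y m)) +
      (∫ t in t₁..σ m, φ t) +
      ∑ i ∈ Finset.range m, 2 / (k (y (i + 1) - y i) * Δ) := by
    intro m
    induction m with
    | zero =>
      intro _
      simp [hσ0, hy0]
    | succ m ih =>
      intro hm
      have hmN : m < N := hm
      have ihm := ih (Nat.le_of_lt hmN)
      have hκ' : 0 < k (y m - y (m + 1)) := by
        have : y m - y (m + 1) = -(y (m + 1) - y m) := by ring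
        rw [this, hk.symm]
        exact hpos m hmN
      have step := edge_step k hk u vt hvderiv hsum φ hφcont hdiff
        (y m) (y (m + 1)) hκ' (σ m) (σ (m + 1)) (hσpos m) (hσlt m)
      have hkeq : k (y m - y (m + 1)) = k (y (m + 1) - y m) := by
        have : y m - y (m + 1) = -(y (m + 1) - y m) := by ring
        rw [this, hk.symm]
      rw [hkeq, hσsucc m] at step
      have hadj : (∫ t in t₁..σ m, φ t) + ∫ t in σ m..σ (m + 1), φ t
          = ∫ t in t₁..σ (m + 1), φ t :=
        intervalIntegral.integral_add_adjacent_intervals (hφint t₁ (σ m) ht₁ (hσpos m))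
          (hφint (σ m) (σ (m + 1)) (hσpos m) (hσpos (m + 1)))
      rw [Finset.sum_range_succ]
      linarith
  have hfin := main N le_rfl
  rw [hσN, hyN] at hfin
  have hsumeq : ∑ i ∈ Finset.range N, 2 / (k (y (i + 1) - y i) * Δ)
      = 2 * (N : ℝ) / (t₂ - t₁) * ∑ i ∈ Finset.range N, 1 / k (y (i + 1) - y i) := by
    rw [Finset.mul_sum]
    apply Finset.sum_congr rfl
    intro i hi
    have hκi := hpos i (Finset.mem_range.mp hi)
    rw [hΔdef]
    field_simp
  have h1 : 0 < u t₁ x₁ := hupos t₁ ht₁.le x₁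
  have h2 : 0 < u t₂ x₂ := hupos t₂ (ht₁.trans ht).le x₂
  rw [← Real.exp_log h1, ← Real.exp_log h2, ← Real.exp_add, Real.exp_le_exp]
  linarith [hfin, hsumeq.symm.le, hsumeq.le]
end
end

section
/- Let k: ℤ → [0,∞) be a nontrivial kernel with k(0)=0, k(−j)=k(j) for all j ∈ ℤ and |k|₁ := ∑_{j∈ℤ} k(j) < ∞, with support S = {j : k(j) > 0}, and suppose ∑_{j∈S} k(j) log(2 + 1/k(j)) < ∞. Define ρ: [0,∞) → [0,∞) by ρ(λ) = ∑_{j∈S} k(j)·(H')^{−1}(λ/k(j)) for λ > 0 and ρ(0) = 0. Then: (1) ρ is a strictly increasing continuous bijection from [0,∞) onto [0,∞); (2) ρ(λ) − |k|₁·log(2λ) → ∑_{j∈S} k(j) log(1/k(j)) as λ → ∞; (3) there exist constants C₁, C₂ > 0 such that C₁(ρ̄₁(λ) + ρ̄₂(λ)) ≤ ρ(λ) ≤ C₂(ρ̄₁(λ) + ρ̄₂(λ)) for all λ > 0, where ρ̄₁(λ) = ∑_{j∈S, k(j)<λ} k(j) log(1 + λ/k(j)) and ρ̄₂(λ) = ∑_{j∈ℤ,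 k(j)≥λ} λ. -/
open scoped BigOperators
open Filter Set

noncomputable section

/-- The derivative `H'(x) = (1/2)(e^x − e^{−x} + 2x e^{−x})` of `H`. -/
def HD (x : ℝ) : ℝ := (1 / 2) * (Real.exp x - Real.exp (-x) + 2 * x * Real.exp (-x))

/-- The inverse function `(H')^{−1}` (well defined since `H'` is a strictly increasing
bijection of `ℝ`). -/
def HDinv : ℝ → ℝ := Function.invFun HD

/-- `ρ(λ) = ∑_{j∈S} k(j) (H')^{−1}(λ/k(j))` for `λ > 0`, `ρ(λ)=0` for `λ ≤ 0`
(note that the summands with `k(j) = 0` vanish). -/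
def rho (k : ℤ → ℝ) (lam : ℝ) : ℝ :=
  if lam ≤ 0 then 0 else ∑' j : ℤ, k j * HDinv (lam / k j)

/-- The inverse function `ρ^{−1}` of `ρ`. -/
def rhoInv (k : ℤ → ℝ) : ℝ → ℝ := Function.invFun (rho k)

/-- `G(a) = ∫_0^a ρ^{−1}(s) ds`. -/
def Gfun (k : ℤ → ℝ) (a : ℝ) : ℝ := ∫ s in (0:ℝ)..a, rhoInv k s

/-- `ρ̄₁(λ) = ∑_{j∈S, k(j)<λ} k(j) log(1 + λ/k(j))` (summands with `k(j)=0` vanish). -/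
def rhobar1 (k : ℤ → ℝ) (lam : ℝ) : ℝ :=
  ∑' j : ℤ, if k j < lam then k j * Real.log (1 + lam / k j) else 0

/-- `ρ̄₂(λ) = ∑_{j∈ℤ, k(j)≥λ} λ`. -/
def rhobar2 (k : ℤ → ℝ) (lam : ℝ) : ℝ :=
  ∑' j : ℤ, if lam ≤ k j then lam else 0

variable {k : ℤ → ℝ}

lemma hd_hasDerivAt (x : ℝ) :
    HasDerivAt HD ((1/2) * (Real.exp x + (3 - 2*x) * Real.exp (-x))) x := by
  have h1 := Real.hasDerivAt_exp x
  have h2 : HasDerivAt (fun x : ℝ => Real.exp (-x)) (-Real.exp (-x)) x := by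
    simpa [Function.comp_def] using (Real.hasDerivAt_exp (-x)).comp x (hasDerivAt_neg x)
  have h3 : HasDerivAt (fun x : ℝ => 2 * x * Real.exp (-x))
      (2 * Real.exp (-x) + 2 * x * (-Real.exp (-x))) x := by
    have := ((hasDerivAt_id x).const_mul 2).mul h2
    simpa [mul_comm, Pi.mul_def] using this
  have := (((h1.sub h2).add h3).const_mul (1/2 : ℝ))
  exact this.congr_deriv (by ring)

lemma hd_deriv_pos (x : ℝ) : 0 < (1/2) * (Real.exp x + (3 - 2*x) * Real.exp (-x)) := by
  have h1 : 2*x + 1 ≤ Real.exp (2*x) := Real.add_one_le_exp (2*x)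
  have h2 : Real.exp (2*x) = Real.exp x * Real.exp x := by rw [← Real.exp_add]; ring_nf
  have h3 : Real.exp x * Real.exp (-x) = 1 := by rw [← Real.exp_add]; simp
  nlinarith [Real.exp_pos x, Real.exp_pos (-x)]

lemma hd_strictMono : StrictMono HD := by
  have : ∀ x : ℝ, 0 < deriv HD x := by
    intro x; rw [(hd_hasDerivAt x).deriv]; exact hd_deriv_pos x
  exact strictMono_of_deriv_pos this

lemma hd_continuous : Continuous HD := by
  unfold HD; continuity

lemma hd_zero : HD 0 = 0 := by simp [HD]

lemma hd_ge_half {x : ℝ} (hx : 0 ≤ x) : x / 2 ≤ HD x := by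
  have h1 : x + 1 ≤ Real.exp x := Real.add_one_le_exp x
  have h2 : Real.exp (-x) ≤ 1 := Real.exp_le_one_iff.mpr (by linarith)
  have h3 : 0 ≤ x * Real.exp (-x) := mul_nonneg hx (Real.exp_pos _).le
  unfold HD; nlinarith

lemma hd_le (x : ℝ) : HD x ≤ (1/2) * Real.exp x + 1 := by
  have h1 : x * Real.exp (-x) ≤ 1 := by
    rcases le_or_gt x 0 with h | h
    · have := Real.exp_pos (-x); nlinarith
    · have h2 : x ≤ Real.exp x := by linarith [Real.add_one_le_exp x]
      have h3 : Real.exp (-x) = (Real.exp x)⁻¹ := Real.exp_neg x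
      rw [h3]
      rw [← div_eq_mul_inv, div_le_one (Real.exp_pos x)]
      exact h2
  have := Real.exp_pos (-x)
  unfold HD; nlinarith

lemma hd_le_three {x : ℝ} (h0 : 0 ≤ x) (h1 : x ≤ 1) : HD x ≤ 3 * x := by
  -- e^x - 1 ≤ x e^x ≤ e x ;  e^{-x} ≥ 1 - x ; x e^{-x} ≤ x
  have e1 : 1 - x ≤ Real.exp (-x) := by have := Real.add_one_le_exp (-x); linarith
  have e2 : Real.exp x * (1 - x) ≤ 1 := by
    have := Real.add_one_le_exp (-x)
    have h3 : Real.exp x * Real.exp (-x) = 1 := by rw [← Real.exp_add]; simp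
    nlinarith [Real.exp_pos x]
  have e3 : Real.exp x ≤ Real.exp 1 := Real.exp_le_exp.mpr h1
  have e4 : Real.exp 1 ≤ 2.7182818286 := Real.exp_one_lt_d9.le
  have e5 : Real.exp (-x) ≤ 1 := Real.exp_le_one_iff.mpr (by linarith)
  have e6 : x * Real.exp (-x) ≤ x := by nlinarith [Real.exp_pos (-x)]
  -- HD x = 1/2 (e^x - e^{-x}) + x e^{-x}
  -- e^x - e^{-x} ≤ e^x - (1-x) = (e^x - 1) + x ≤ x e^x + x ≤ (e+1) x
  have e7 : Real.exp x - 1 ≤ x * Real.exp x := by nlinarith [Real.exp_pos x]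
  unfold HD; nlinarith [Real.exp_pos x]

lemma hd_surjective : Function.Surjective HD := by
  have h1 : Tendsto HD atTop atTop := by
    apply tendsto_atTop_mono' atTop ?_ (tendsto_id.atTop_div_const (by norm_num : (0:ℝ) < 2))
    filter_upwards [eventually_ge_atTop (0:ℝ)] with x hx
    exact hd_ge_half hx
  have h2 : Tendsto HD atBot atBot := by
    apply tendsto_atBot_mono' atBot ?_
      (tendsto_id.atBot_mul_const (by norm_num : (0:ℝ) < 3/2) :
        Tendsto (fun x : ℝ => x * (3/2)) atBot atBot)
    filter_upwards [eventually_le_atBot (0:ℝ)] with x hx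
    have e1 : Real.exp x ≤ 1 := Real.exp_le_one_iff.mpr hx
    have e2 : 1 - x ≤ Real.exp (-x) := by have := Real.add_one_le_exp (-x); linarith
    have e4 : 1 ≤ Real.exp (-x) := Real.one_le_exp_iff.mpr (by linarith)
    have e3 : x * Real.exp (-x) ≤ x := by
      nlinarith [mul_nonneg (neg_nonneg.mpr hx) (by linarith : (0:ℝ) ≤ Real.exp (-x) - 1)]
    show HD x ≤ x * (3/2)
    unfold HD; nlinarith
  exact hd_continuous.surjective h1 h2

lemma hd_hdinv (y : ℝ) : HD (HDinv y) = y := Function.invFun_eq (hd_surjective y)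

lemma hdinv_hd (x : ℝ) : HDinv (HD x) = x :=
  Function.leftInverse_invFun hd_strictMono.injective x

lemma hdinv_zero : HDinv 0 = 0 := by
  have := hdinv_hd 0; rwa [hd_zero] at this

lemma le_hdinv {x y : ℝ} (h : HD x ≤ y) : x ≤ HDinv y := by
  have := hd_hdinv y
  by_contra hc
  push_neg at hc
  exact absurd (this ▸ hd_strictMono hc) (not_lt.mpr h)

lemma hdinv_le {x y : ℝ} (h : y ≤ HD x) : HDinv y ≤ x := by
  by_contra hc
  push_neg at hc
  exact absurd ((hd_hdinv y) ▸ hd_strictMono hc) (not_lt.mpr h)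

lemma hdinv_strictMono : StrictMono HDinv := by
  intro a b hab
  have ha := hd_hdinv a
  have hb := hd_hdinv b
  by_contra hc
  push_neg at hc
  have := hd_strictMono.monotone hc
  rw [hb, ha] at this
  exact absurd hab (not_lt.mpr this)

lemma hdinv_mono : Monotone HDinv := hdinv_strictMono.monotone

lemma hdinv_nonneg {y : ℝ} (hy : 0 ≤ y) : 0 ≤ HDinv y := by
  have := hdinv_mono hy
  rwa [hdinv_zero] at this

lemma hdinv_pos {y : ℝ} (hy : 0 < y) : 0 < HDinv y := by
  have := hdinv_strictMono hy
  rwa [hdinv_zero] at this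

lemma hdinv_continuous : Continuous HDinv := by
  have he : ∀ y, HDinv y =
      (StrictMono.orderIsoOfSurjective HD hd_strictMono hd_surjective).symm y := by
    intro y
    apply hd_strictMono.injective
    rw [hd_hdinv]
    exact ((StrictMono.orderIsoOfSurjective HD hd_strictMono
      hd_surjective).apply_symm_apply y).symm
  rw [funext he]
  exact OrderIso.continuous _

lemma hdinv_le_two_mul {y : ℝ} (hy : 0 ≤ y) : HDinv y ≤ 2 * y :=
  hdinv_le (by have := hd_ge_half (by linarith : (0:ℝ) ≤ 2*y); linarith)

lemma hdinv_ge_third {y : ℝ} (h0 : 0 ≤ y) (h3 : y ≤ 3) : y / 3 ≤ HDinv y :=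
  le_hdinv (by have := hd_le_three (by linarith : (0:ℝ) ≤ y/3) (by linarith); linarith)

lemma hdinv_le_log {y : ℝ} (hy : 0 ≤ y) : HDinv y ≤ Real.log (1 + 2*y) := by
  apply hdinv_le
  have hs : (0:ℝ) < 1 + 2*y := by linarith
  have hexp : Real.exp (Real.log (1 + 2*y)) = 1 + 2*y := Real.exp_log hs
  have hlog : 0 ≤ Real.log (1 + 2*y) := Real.log_nonneg (by linarith)
  unfold HD
  rw [hexp, Real.exp_neg, hexp]
  have h2 : 0 ≤ 2 * Real.log (1+2*y) * ((1+2*y):ℝ)⁻¹ := by positivity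
  have h3 : ((1+2*y):ℝ)⁻¹ ≤ 1 := by
    rw [inv_le_one_iff₀]; right; linarith
  nlinarith [inv_pos.mpr hs]

lemma hdinv_ge_log {y : ℝ} (hy : 2 ≤ y) : (1/2) * Real.log (1 + y) ≤ HDinv y := by
  apply le_hdinv
  set x := (1/2) * Real.log (1 + y) with hxdef
  have h1y : (0:ℝ) < 1 + y := by linarith
  have hx0 : 0 ≤ x := by
    have : 0 ≤ Real.log (1+y) := Real.log_nonneg (by linarith)
    linarith
  have ht : Real.exp x * Real.exp x = 1 + y := by
    rw [← Real.exp_add]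
    rw [show x + x = Real.log (1+y) by ring]
    exact Real.exp_log h1y
  have hHD := hd_le x
  have htpos := Real.exp_pos x
  -- t = exp x, t^2 = 1+y ≥ 3, show (1/2) t + 1 ≤ y
  set t := Real.exp x
  have ht17 : (17:ℝ)/10 ≤ t := by nlinarith [sq_nonneg (t - 17/10)]
  nlinarith

lemma hdinv_le_log2 {y : ℝ} (hy : 1 ≤ y) : HDinv y ≤ Real.log (2 * y) := by
  apply hdinv_le
  have hs : (0:ℝ) < 2 * y := by linarith
  have hexp : Real.exp (Real.log (2*y)) = 2*y := Real.exp_log hs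
  have hlog : Real.log 2 ≤ Real.log (2*y) := by
    apply Real.log_le_log (by norm_num); linarith
  have hlog2 : (1:ℝ)/2 ≤ Real.log 2 := by
    rw [Real.le_log_iff_exp_le (by norm_num : (0:ℝ) < 2)]
    have h1 : Real.exp (1/2 : ℝ) * Real.exp (1/2 : ℝ) = Real.exp 1 := by
      rw [← Real.exp_add]; norm_num
    nlinarith [Real.exp_pos (1/2 : ℝ), Real.exp_one_lt_d9]
  unfold HD
  rw [hexp, Real.exp_neg, hexp]
  have hinv : (0:ℝ) < (2*y)⁻¹ := by positivity
  -- need y ≤ (1/2)(2y - (2y)⁻¹ + 2 log(2y) (2y)⁻¹), i.e. (2 log 2y - 1)(2y)⁻¹ ≥ 0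
  have : (0:ℝ) ≤ (2 * Real.log (2*y) - 1) * (2*y)⁻¹ := by
    apply mul_nonneg ?_ hinv.le
    linarith
  nlinarith

lemma hdinv_ge_log2 {y : ℝ} (hy : 2 ≤ y) : Real.log (2 * y) - 2 / y ≤ HDinv y := by
  apply le_hdinv
  set x := Real.log (2*y) - 2/y with hxdef
  have hs : (0:ℝ) < 2 * y := by linarith
  have hy0 : (0:ℝ) < y := by linarith
  have hexp : Real.exp x = 2 * y * Real.exp (-(2/y)) := by
    rw [hxdef, show Real.log (2*y) - 2/y = Real.log (2*y) + (-(2/y)) by ring,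
      Real.exp_add, Real.exp_log hs]
  have hkey : Real.exp (-(2/y)) ≤ 1 - 1/y := by
    have h1 : 1 + 2/y ≤ Real.exp (2/y) := by
      have := Real.add_one_le_exp (2/y); linarith
    have h2 : Real.exp (-(2/y)) = (Real.exp (2/y))⁻¹ := Real.exp_neg _
    rw [h2]
    have hp : (0:ℝ) < 1 + 2/y := by positivity
    have : (Real.exp (2/y))⁻¹ ≤ (1 + 2/y)⁻¹ := by
      apply inv_anti₀ hp h1
    apply this.trans
    rw [inv_le_iff_one_le_mul₀ hp] at *
    have h4 : (0:ℝ) < 1/y := by positivity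
    -- (1-1/y)(1+2/y) = 1 + 1/y - 2/y² ≥ 1 ⟺ 1/y ≥ 2/y² ⟺ y ≥ 2
    have h5 : 1/y * (2/y) ≤ 1/y * 1 := by
      apply mul_le_mul_of_nonneg_left ?_ h4.le
      rw [div_le_one hy0]; exact hy
    have h6 : (2:ℝ)/y = 2*(1/y) := by ring
    nlinarith
  have hb := hd_le x
  have : (1/2) * Real.exp x ≤ y - 1 := by
    rw [hexp]
    have := Real.exp_pos (-(2/y))
    have h7 : y * (1/y) = 1 := mul_one_div_cancel hy0.ne'
    nlinarith [mul_le_mul_of_nonneg_left hkey hy0.le]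
  linarith

lemma rho_term_nonneg (hk : IsKernel k) {lam : ℝ} (hl : 0 ≤ lam) (j : ℤ) :
    0 ≤ k j * HDinv (lam / k j) :=
  mul_nonneg (hk.nonneg j) (hdinv_nonneg (div_nonneg hl (hk.nonneg j)))

lemma rho_term_le (hk : IsKernel k) {lam : ℝ} (hl : 0 < lam) (j : ℤ) :
    k j * HDinv (lam / k j) ≤ k j * (Real.log (1 + 2*lam) + Real.log (2 + 1/k j)) := by
  rcases (hk.nonneg j).eq_or_lt with h | h
  · simp [← h]
  · have hy : 0 ≤ lam / k j := by positivity
    apply mul_le_mul_of_nonneg_left ?_ (hk.nonneg j)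
    calc HDinv (lam / k j) ≤ Real.log (1 + 2*(lam/k j)) := hdinv_le_log hy
      _ ≤ Real.log ((1 + 2*lam) * (2 + 1/k j)) := by
          apply Real.log_le_log (by positivity)
          have hinv : 0 < (k j)⁻¹ := by positivity
          rw [div_eq_mul_inv, one_div]
          nlinarith [mul_pos hl hinv]
      _ = Real.log (1 + 2*lam) + Real.log (2 + 1/k j) := by
          rw [Real.log_mul (by positivity) (by positivity)]

lemma summable_aux (hk : IsKernel k)
    (hlog : Summable fun j : ℤ => k j * Real.log (2 + 1 / k j)) (c : ℝ) :
    Summable (fun j : ℤ => k j * (c + Real.log (2 + 1/k j))) := by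
  have h1 : Summable (fun j : ℤ => k j * c) := hk.summable.mul_right c
  have := h1.add hlog
  apply this.congr
  intro j; ring

lemma summable_rho_term (hk : IsKernel k)
    (hlog : Summable fun j : ℤ => k j * Real.log (2 + 1 / k j)) {lam : ℝ} (hl : 0 < lam) :
    Summable (fun j : ℤ => k j * HDinv (lam / k j)) := by
  apply Summable.of_nonneg_of_le (rho_term_nonneg hk hl.le) (rho_term_le hk hl)
  exact summable_aux hk hlog _

lemma ksum_pos (hk : IsKernel k) : 0 < ∑' j : ℤ, k j := by
  obtain ⟨j0, hj0⟩ := hk.nontrivial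
  exact Summable.tsum_pos hk.summable hk.nonneg j0 ((hk.nonneg j0).lt_of_ne (Ne.symm hj0))

lemma k_le_ksum (hk : IsKernel k) (j : ℤ) : k j ≤ ∑' i : ℤ, k i :=
  Summable.le_tsum hk.summable j (fun i _ => hk.nonneg i)

lemma summable_klog (hk : IsKernel k)
    (hlog : Summable fun j : ℤ => k j * Real.log (2 + 1 / k j)) :
    Summable (fun j : ℤ => k j * Real.log (1 / k j)) := by
  set K := ∑' i : ℤ, k i with hK
  have hKpos : 0 < K := ksum_pos hk
  apply Summable.of_norm_bounded (summable_aux hk hlog (Real.log (2 + K)))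
  intro j
  rcases (hk.nonneg j).eq_or_lt with h | h
  · rw [← h]; simp
  · have hinv : 0 < 1 / k j := by positivity
    have hb : 0 ≤ Real.log (2 + 1/k j) := Real.log_nonneg (by linarith)
    have hc : 0 ≤ Real.log (2 + K) := Real.log_nonneg (by linarith)
    rw [Real.norm_eq_abs, abs_mul, abs_of_nonneg (hk.nonneg j)]
    apply mul_le_mul_of_nonneg_left ?_ (hk.nonneg j)
    rcases le_or_gt (k j) 1 with h1 | h1
    · rw [abs_of_nonneg (Real.log_nonneg (by
        rw [le_div_iff₀ h]; linarith))]
      have : Real.log (1/k j) ≤ Real.log (2 + 1/k j) := by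
        apply Real.log_le_log (by positivity)
        linarith
      linarith
    · rw [abs_of_nonpos (Real.log_nonpos (by positivity) (by
        rw [div_le_one h]; linarith))]
      rw [one_div, Real.log_inv, neg_neg]
      have h2 : Real.log (k j) ≤ Real.log (2 + K) := by
        apply Real.log_le_log h
        have := k_le_ksum hk j
        rw [← hK] at *
        linarith
      have hb2 : 0 ≤ Real.log (2 + (k j)⁻¹) := by rw [← one_div]; exact hb
      linarith

lemma rhobar1_term_nonneg (hk : IsKernel k) {lam : ℝ} (hl : 0 < lam) (j : ℤ) :
    0 ≤ (if k j < lam then k j * Real.log (1 + lam / k j) else 0) := by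
  split_ifs with h
  · rcases (hk.nonneg j).eq_or_lt with h0 | h0
    · rw [← h0]; simp
    · have : 0 ≤ lam / k j := by positivity
      exact mul_nonneg (hk.nonneg j) (Real.log_nonneg (by linarith))
  · exact le_refl 0

lemma rhobar1_term_le (hk : IsKernel k) {lam : ℝ} (hl : 0 < lam) (j : ℤ) :
    (if k j < lam then k j * Real.log (1 + lam / k j) else 0) ≤
      k j * (Real.log (1 + 2*lam) + Real.log (2 + 1/k j)) := by
  have hRHS : 0 ≤ k j * (Real.log (1 + 2*lam) + Real.log (2 + 1/k j)) := by
    apply mul_nonneg (hk.nonneg j)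
    have h1 : 0 ≤ Real.log (1 + 2*lam) := Real.log_nonneg (by linarith)
    have h2 : 0 ≤ Real.log (2 + 1/k j) := Real.log_nonneg (by
      have := one_div_nonneg.mpr (hk.nonneg j); linarith)
    linarith
  split_ifs with h
  · rcases (hk.nonneg j).eq_or_lt with h0 | h0
    · rw [← h0]; simp
    · apply mul_le_mul_of_nonneg_left ?_ (hk.nonneg j)
      calc Real.log (1 + lam / k j) ≤ Real.log ((1 + 2*lam) * (2 + 1/k j)) := by
            apply Real.log_le_log (by positivity)
            have hinv : 0 < (k j)⁻¹ := by positivity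
            rw [div_eq_mul_inv, one_div]
            nlinarith [mul_pos hl hinv]
        _ = Real.log (1 + 2*lam) + Real.log (2 + 1/k j) := by
            rw [Real.log_mul (by positivity) (by positivity)]
  · exact hRHS

lemma summable_rhobar1_term (hk : IsKernel k)
    (hlog : Summable fun j : ℤ => k j * Real.log (2 + 1 / k j)) {lam : ℝ} (hl : 0 < lam) :
    Summable (fun j : ℤ => if k j < lam then k j * Real.log (1 + lam / k j) else 0) :=
  Summable.of_nonneg_of_le (rhobar1_term_nonneg hk hl) (rhobar1_term_le hk hl)
    (summable_aux hk hlog _)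

lemma finite_big (hk : IsKernel k) {lam : ℝ} (hl : 0 < lam) :
    {j : ℤ | lam ≤ k j}.Finite := by
  have h := hk.summable.tendsto_cofinite_zero.eventually_lt_const hl
  rw [eventually_cofinite] at h
  convert h using 1
  ext j
  simp [not_lt]

lemma summable_rhobar2_term (hk : IsKernel k) {lam : ℝ} (hl : 0 < lam) :
    Summable (fun j : ℤ => if lam ≤ k j then lam else 0) := by
  apply summable_of_ne_finset_zero (s := (finite_big hk hl).toFinset)
  intro j hj
  rw [Set.Finite.mem_toFinset] at hj
  simp only [Set.mem_setOf_eq] at hj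
  rw [if_neg hj]

lemma rho_eq {lam : ℝ} (hl : 0 < lam) :
    rho k lam = ∑' j : ℤ, k j * HDinv (lam / k j) := if_neg (not_le.mpr hl)

lemma rho_pos (hk : IsKernel k)
    (hlog : Summable fun j : ℤ => k j * Real.log (2 + 1 / k j)) {lam : ℝ} (hl : 0 < lam) :
    0 < rho k lam := by
  rw [rho_eq hl]
  obtain ⟨j0, hj0⟩ := hk.nontrivial
  have hj0' : 0 < k j0 := (hk.nonneg j0).lt_of_ne (Ne.symm hj0)
  exact Summable.tsum_pos (summable_rho_term hk hlog hl) (rho_term_nonneg hk hl.le) j0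
    (mul_pos hj0' (hdinv_pos (by positivity)))

lemma rho_strictMonoOn (hk : IsKernel k)
    (hlog : Summable fun j : ℤ => k j * Real.log (2 + 1 / k j)) :
    StrictMonoOn (rho k) (Ici 0) := by
  intro a ha b hb hab
  replace ha : (0:ℝ) ≤ a := ha
  have hb0 : 0 < b := lt_of_le_of_lt ha hab
  rcases ha.eq_or_lt with h0 | h0
  · rw [← h0]
    have : rho k 0 = 0 := if_pos le_rfl
    rw [this]
    exact rho_pos hk hlog hb0
  · rw [rho_eq h0, rho_eq hb0]
    obtain ⟨j0, hj0⟩ := hk.nontrivial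
    have hj0' : 0 < k j0 := (hk.nonneg j0).lt_of_ne (Ne.symm hj0)
    apply Summable.tsum_lt_tsum (i := j0) ?_ ?_ (summable_rho_term hk hlog h0)
      (summable_rho_term hk hlog hb0)
    · intro j
      show k j * HDinv (a / k j) ≤ k j * HDinv (b / k j)
      rcases (hk.nonneg j).eq_or_lt with hj | hj
      · rw [← hj]; simp
      · apply mul_le_mul_of_nonneg_left ?_ (hk.nonneg j)
        exact hdinv_mono (by gcongr)
    · show k j0 * HDinv (a / k j0) < k j0 * HDinv (b / k j0)
      apply mul_lt_mul_of_pos_left ?_ hj0'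
      exact hdinv_strictMono (by gcongr)

lemma rho_continuousOn (hk : IsKernel k)
    (hlog : Summable fun j : ℤ => k j * Real.log (2 + 1 / k j)) :
    ContinuousOn (rho k) (Ici 0) := by
  intro x hx
  replace hx : (0:ℝ) ≤ x := hx
  have term_cont : ∀ j : ℤ, Continuous (fun lam : ℝ => k j * HDinv (lam / k j)) := by
    intro j
    exact continuous_const.mul (hdinv_continuous.comp (continuous_id.div_const (k j)))
  rcases hx.eq_or_lt with h0 | h0
  · rw [← h0]
    have : Ici (0:ℝ) = insert 0 (Ioi 0) := by
      rw [Set.Ioi_insert]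
    rw [this]
    rw [continuousWithinAt_insert_self]
    have hval : rho k 0 = 0 := if_pos le_rfl
    unfold ContinuousWithinAt
    rw [hval]
    have key : Tendsto (fun lam => ∑' j : ℤ, k j * HDinv (lam / k j))
        (nhdsWithin 0 (Ioi 0)) (nhds (∑' _j : ℤ, (0:ℝ))) := by
      apply tendsto_tsum_of_dominated_convergence
        (bound := fun j : ℤ => k j * (Real.log (1 + 2*1) + Real.log (2 + 1/k j)))
        (summable_aux hk hlog _)
      · intro j
        have : Tendsto (fun lam : ℝ => k j * HDinv (lam / k j)) (nhds 0)
            (nhds (k j * HDinv (0 / k j))) := (term_cont j).tendsto 0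
        simpa [hdinv_zero] using this.mono_left nhdsWithin_le_nhds
      · filter_upwards [Ioc_mem_nhdsGT_of_mem (by norm_num : (0:ℝ) ∈ Ico 0 1)]
          with lam hlam
        intro j
        rw [Real.norm_eq_abs, abs_of_nonneg (rho_term_nonneg hk hlam.1.le j)]
        refine (rho_term_le hk hlam.1 j).trans ?_
        apply mul_le_mul_of_nonneg_left ?_ (hk.nonneg j)
        have : Real.log (1 + 2*lam) ≤ Real.log (1 + 2*1) :=
          Real.log_le_log (by linarith [hlam.1]) (by linarith [hlam.2])
        exact add_le_add_left this _
    rw [tsum_zero] at key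
    apply key.congr'
    filter_upwards [self_mem_nhdsWithin] with lam hlam
    exact (rho_eq hlam).symm
  · apply ContinuousAt.continuousWithinAt
    have hev : ∀ᶠ lam in nhds x, lam ∈ Ioo (x/2) (2*x) :=
      Ioo_mem_nhds (by linarith) (by linarith)
    have key : Tendsto (fun lam => ∑' j : ℤ, k j * HDinv (lam / k j)) (nhds x)
        (nhds (∑' j : ℤ, k j * HDinv (x / k j))) := by
      apply tendsto_tsum_of_dominated_convergence
        (bound := fun j : ℤ => k j * (Real.log (1 + 2*(2*x)) + Real.log (2 + 1/k j)))
        (summable_aux hk hlog _)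
      · intro j; exact (term_cont j).tendsto x
      · filter_upwards [hev] with lam hlam
        intro j
        have hlam0 : 0 < lam := lt_trans (by linarith) hlam.1
        rw [Real.norm_eq_abs, abs_of_nonneg (rho_term_nonneg hk hlam0.le j)]
        refine (rho_term_le hk hlam0 j).trans ?_
        apply mul_le_mul_of_nonneg_left ?_ (hk.nonneg j)
        have : Real.log (1 + 2*lam) ≤ Real.log (1 + 2*(2*x)) :=
          Real.log_le_log (by linarith) (by linarith [hlam.2])
        exact add_le_add_left this _
    unfold ContinuousAt
    rw [rho_eq h0]
    apply key.congr'
    filter_upwards [hev] with lam hlam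
    exact (rho_eq (lt_trans (by linarith) hlam.1)).symm

lemma rho_nonneg (hk : IsKernel k)
    (hlog : Summable fun j : ℤ => k j * Real.log (2 + 1 / k j)) {lam : ℝ}
    (hl : 0 ≤ lam) : 0 ≤ rho k lam := by
  rcases hl.eq_or_lt with h | h
  · rw [← h]; exact le_of_eq (if_pos le_rfl).symm
  · exact (rho_pos hk hlog h).le

lemma rho_tendsto_atTop (hk : IsKernel k)
    (hlog : Summable fun j : ℤ => k j * Real.log (2 + 1 / k j)) :
    Tendsto (rho k) atTop atTop := by
  obtain ⟨j0, hj0⟩ := hk.nontrivial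
  have hj0' : 0 < k j0 := (hk.nonneg j0).lt_of_ne (Ne.symm hj0)
  have hlow : Tendsto (fun lam : ℝ => k j0 * ((1/2) * Real.log (1 + lam / k j0)))
      atTop atTop := by
    apply Tendsto.const_mul_atTop hj0'
    apply Tendsto.const_mul_atTop (by norm_num : (0:ℝ) < 1/2)
    apply Real.tendsto_log_atTop.comp
    apply tendsto_atTop_add_const_left
    exact tendsto_id.atTop_div_const hj0'
  apply tendsto_atTop_mono' atTop ?_ hlow
  filter_upwards [eventually_ge_atTop (2 * k j0)] with lam hlam
  have hl0 : 0 < lam := lt_of_lt_of_le (by positivity) hlam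
  have hy2 : 2 ≤ lam / k j0 := by rw [le_div_iff₀ hj0']; linarith
  rw [rho_eq hl0]
  calc k j0 * ((1/2) * Real.log (1 + lam / k j0))
      ≤ k j0 * HDinv (lam / k j0) :=
        mul_le_mul_of_nonneg_left (hdinv_ge_log hy2) hj0'.le
    _ ≤ ∑' j : ℤ, k j * HDinv (lam / k j) :=
        Summable.le_tsum (summable_rho_term hk hlog hl0) j0
          (fun i _ => rho_term_nonneg hk hl0.le i)

lemma rho_surjOn (hk : IsKernel k)
    (hlog : Summable fun j : ℤ => k j * Real.log (2 + 1 / k j)) :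
    Set.SurjOn (rho k) (Ici 0) (Ici 0) := by
  intro y hy
  replace hy : (0:ℝ) ≤ y := hy
  obtain ⟨b, hb1, hb2⟩ : ∃ b : ℝ, 0 ≤ b ∧ y ≤ rho k b := by
    obtain ⟨b, hb, hb'⟩ :=
      ((eventually_ge_atTop (0:ℝ)).and
        ((rho_tendsto_atTop hk hlog).eventually_ge_atTop y)).exists
    exact ⟨b, hb, hb'⟩
  have h0 : rho k 0 = 0 := if_pos le_rfl
  have := intermediate_value_Icc hb1 ((rho_continuousOn hk hlog).mono Icc_subset_Ici_self)
  rw [h0] at this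
  have hy' : y ∈ Icc 0 (rho k b) := ⟨hy, hb2⟩
  obtain ⟨x, hx, hxy⟩ := this hy'
  exact ⟨x, hx.1, hxy⟩

lemma comp_lower (hk : IsKernel k) {lam : ℝ} (hl : 0 < lam) (j : ℤ) :
    (1/4) * (if k j < lam then k j * Real.log (1 + lam / k j) else lam) ≤
      k j * HDinv (lam / k j) := by
  split_ifs with h
  · rcases (hk.nonneg j).eq_or_lt with h0 | h0
    · rw [← h0]; simp
    · set y := lam / k j with hy
      have hy0 : 0 < y := by positivity
      have hstep : (1/4) * Real.log (1 + y) ≤ HDinv y := by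
        rcases le_or_gt y 3 with h3 | h3
        · have hlog_le : Real.log (1 + y) ≤ y := by
            have := Real.log_le_sub_one_of_pos (by linarith : (0:ℝ) < 1 + y)
            linarith
          have := hdinv_ge_third hy0.le h3
          linarith
        · have h2 : (2:ℝ) ≤ y := by linarith
          have hln : 0 ≤ Real.log (1 + y) := Real.log_nonneg (by linarith)
          have := hdinv_ge_log h2
          linarith
      nlinarith [mul_le_mul_of_nonneg_left hstep (hk.nonneg j)]
  · push_neg at h
    have h0 : 0 < k j := lt_of_lt_of_le hl h
    set y := lam / k j with hy
    have hy0 : 0 < y := by positivity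
    have hy1 : y ≤ 1 := by rw [hy, div_le_one h0]; exact h
    have hstep := hdinv_ge_third hy0.le (by linarith)
    have hcancel : k j * y = lam := by
      rw [hy, mul_div_cancel₀ _ h0.ne']
    nlinarith [mul_le_mul_of_nonneg_left hstep (hk.nonneg j)]

lemma comp_upper (hk : IsKernel k) {lam : ℝ} (hl : 0 < lam) (j : ℤ) :
    k j * HDinv (lam / k j) ≤
      2 * (if k j < lam then k j * Real.log (1 + lam / k j) else lam) := by
  split_ifs with h
  · rcases (hk.nonneg j).eq_or_lt with h0 | h0
    · rw [← h0]; simp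
    · set y := lam / k j with hy
      have hy0 : 0 < y := by positivity
      have hstep : HDinv y ≤ 2 * Real.log (1 + y) := by
        calc HDinv y ≤ Real.log (1 + 2*y) := hdinv_le_log hy0.le
          _ ≤ Real.log ((1 + y) * (1 + y)) := by
              apply Real.log_le_log (by linarith)
              nlinarith
          _ = Real.log (1 + y) + Real.log (1 + y) :=
              Real.log_mul (by linarith) (by linarith)
          _ = 2 * Real.log (1 + y) := by ring
      nlinarith [mul_le_mul_of_nonneg_left hstep (hk.nonneg j)]
  · push_neg at h
    have h0 : 0 < k j := lt_of_lt_of_le hl h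
    set y := lam / k j with hy
    have hy0 : 0 < y := by positivity
    have hstep := hdinv_le_two_mul hy0.le
    have hcancel : k j * y = lam := by
      rw [hy, mul_div_cancel₀ _ h0.ne']
    nlinarith [mul_le_mul_of_nonneg_left hstep (hk.nonneg j)]

lemma rhobar_sum (hk : IsKernel k)
    (hlog : Summable fun j : ℤ => k j * Real.log (2 + 1 / k j)) {lam : ℝ} (hl : 0 < lam) :
    rhobar1 k lam + rhobar2 k lam =
      ∑' j : ℤ, (if k j < lam then k j * Real.log (1 + lam / k j) else lam) := by
  unfold rhobar1 rhobar2
  rw [← Summable.tsum_add (summable_rhobar1_term hk hlog hl) (summable_rhobar2_term hk hl)]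
  congr 1
  funext j
  rcases lt_or_ge (k j) lam with h | h
  · rw [if_pos h, if_pos h, if_neg (not_le.mpr h), add_zero]
  · rw [if_neg (not_lt.mpr h), if_neg (not_lt.mpr h), if_pos h, zero_add]

lemma summable_comb (hk : IsKernel k)
    (hlog : Summable fun j : ℤ => k j * Real.log (2 + 1 / k j)) {lam : ℝ} (hl : 0 < lam) :
    Summable (fun j : ℤ => if k j < lam then k j * Real.log (1 + lam / k j) else lam) := by
  have := (summable_rhobar1_term hk hlog hl).add (summable_rhobar2_term hk hl)
  apply this.congr
  intro j
  rcases lt_or_ge (k j) lam with h | h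
  · rw [if_pos h, if_pos h, if_neg (not_le.mpr h), add_zero]
  · rw [if_neg (not_lt.mpr h), if_neg (not_lt.mpr h), if_pos h, zero_add]

lemma rho_comparison (hk : IsKernel k)
    (hlog : Summable fun j : ℤ => k j * Real.log (2 + 1 / k j)) {lam : ℝ} (hl : 0 < lam) :
    (1/4) * (rhobar1 k lam + rhobar2 k lam) ≤ rho k lam ∧
      rho k lam ≤ 2 * (rhobar1 k lam + rhobar2 k lam) := by
  rw [rhobar_sum hk hlog hl, rho_eq hl]
  constructor
  · rw [← tsum_mul_left]
    exact Summable.tsum_le_tsum (comp_lower hk hl) ((summable_comb hk hlog hl).mul_left _)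
      (summable_rho_term hk hlog hl)
  · rw [← tsum_mul_left]
    exact Summable.tsum_le_tsum (comp_upper hk hl) (summable_rho_term hk hlog hl)
      ((summable_comb hk hlog hl).mul_left _)

lemma hdinv_log_close {y : ℝ} (hy : 2 ≤ y) :
    |HDinv y - Real.log (2 * y)| ≤ 2 / y := by
  rw [abs_le]
  constructor
  · have := hdinv_ge_log2 hy
    linarith
  · have := hdinv_le_log2 (by linarith : (1:ℝ) ≤ y)
    have h2 : 0 < 2 / y := by positivity
    linarith

lemma g_eq (hk : IsKernel k) {lam : ℝ} (hl : 0 < lam) {j : ℤ} (hj : 0 < k j) :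
    k j * (HDinv (lam / k j) - Real.log (2*lam) - Real.log (1 / k j)) =
      k j * (HDinv (lam / k j) - Real.log (2 * (lam / k j))) := by
  congr 1
  have : Real.log (2 * (lam / k j)) = Real.log (2*lam) + Real.log (1 / k j) := by
    rw [← Real.log_mul (by positivity) (by positivity)]
    congr 1
    field_simp
  rw [this]
  ring

lemma tsum_g_eq (hk : IsKernel k)
    (hlog : Summable fun j : ℤ => k j * Real.log (2 + 1 / k j)) {lam : ℝ} (hl : 0 < lam) :
    ∑' j : ℤ, k j * (HDinv (lam / k j) - Real.log (2*lam) - Real.log (1 / k j)) =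
      rho k lam - (∑' j : ℤ, k j) * Real.log (2*lam) -
        ∑' j : ℤ, k j * Real.log (1 / k j) := by
  have h1 := summable_rho_term hk hlog hl
  have h2 : Summable (fun j : ℤ => k j * Real.log (2*lam)) :=
    hk.summable.mul_right _
  have h3 := summable_klog hk hlog
  have heq : (fun j : ℤ => k j * (HDinv (lam / k j) - Real.log (2*lam) - Real.log (1 / k j)))
      = fun j : ℤ => (k j * HDinv (lam / k j) - k j * Real.log (2*lam)) -
          k j * Real.log (1 / k j) := by
    funext j; ring
  rw [heq, Summable.tsum_sub (h1.sub h2) h3, Summable.tsum_sub h1 h2, tsum_mul_right, rho_eq hl]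

lemma tsum_g_tendsto (hk : IsKernel k)
    (hlog : Summable fun j : ℤ => k j * Real.log (2 + 1 / k j)) :
    Tendsto (fun lam : ℝ =>
        ∑' j : ℤ, k j * (HDinv (lam / k j) - Real.log (2*lam) - Real.log (1 / k j)))
      atTop (nhds 0) := by
  set K := ∑' i : ℤ, k i with hK
  have hKpos : 0 < K := ksum_pos hk
  have key : Tendsto (fun lam : ℝ =>
      ∑' j : ℤ, k j * (HDinv (lam / k j) - Real.log (2*lam) - Real.log (1 / k j)))
      atTop (nhds (∑' _j : ℤ, (0:ℝ))) := by
    apply tendsto_tsum_of_dominated_convergence (bound := k) hk.summable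
    · intro j
      rcases (hk.nonneg j).eq_or_lt with h0 | h0
      · apply Tendsto.congr' ?_ tendsto_const_nhds
        filter_upwards with lam
        rw [← h0]; ring
      · -- squeeze |g| ≤ 2 k j / lam
        have hdecay : Tendsto (fun lam : ℝ => 2 * k j * k j / lam) atTop (nhds 0) :=
          tendsto_const_nhds.div_atTop tendsto_id
        apply tendsto_of_tendsto_of_tendsto_of_le_of_le'
          (by simpa using hdecay.neg) hdecay
        · filter_upwards [eventually_ge_atTop (2 * k j)] with lam hlam
          have hl0 : 0 < lam := lt_of_lt_of_le (by positivity) hlam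
          have hy2 : 2 ≤ lam / k j := by rw [le_div_iff₀ h0]; linarith
          rw [g_eq hk hl0 h0]
          have habs := hdinv_log_close hy2
          have h2y : 2 / (lam / k j) = 2 * k j / lam := by
            field_simp
          rw [h2y] at habs
          have := (abs_le.mp habs).1
          have hb : k j * (-(2 * k j / lam)) ≤
              k j * (HDinv (lam / k j) - Real.log (2 * (lam / k j))) :=
            mul_le_mul_of_nonneg_left (by linarith) (hk.nonneg j)
          calc -(2 * k j * k j / lam) = k j * (-(2 * k j / lam)) := by ring
            _ ≤ _ := hb
        · filter_upwards [eventually_ge_atTop (2 * k j)] with lam hlam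
          have hl0 : 0 < lam := lt_of_lt_of_le (by positivity) hlam
          have hy2 : 2 ≤ lam / k j := by rw [le_div_iff₀ h0]; linarith
          rw [g_eq hk hl0 h0]
          have habs := hdinv_log_close hy2
          have h2y : 2 / (lam / k j) = 2 * k j / lam := by
            field_simp
          rw [h2y] at habs
          have := (abs_le.mp habs).2
          have hb : k j * (HDinv (lam / k j) - Real.log (2 * (lam / k j))) ≤
              k j * (2 * k j / lam) :=
            mul_le_mul_of_nonneg_left (by linarith) (hk.nonneg j)
          calc k j * (HDinv (lam / k j) - Real.log (2 * (lam / k j)))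
              ≤ k j * (2 * k j / lam) := hb
            _ = 2 * k j * k j / lam := by ring
    · filter_upwards [eventually_ge_atTop (2 * K)] with lam hlam
      intro j
      rcases (hk.nonneg j).eq_or_lt with h0 | h0
      · rw [← h0]; simp
      · have hl0 : 0 < lam := lt_of_lt_of_le (by positivity) hlam
        have hkj : k j ≤ K := k_le_ksum hk j
        have hy2 : 2 ≤ lam / k j := by
          rw [le_div_iff₀ h0]; linarith
        rw [Real.norm_eq_abs, g_eq hk hl0 h0, abs_mul, abs_of_nonneg (hk.nonneg j)]
        have habs := hdinv_log_close hy2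
        have hfrac : 2 / (lam / k j) ≤ 1 := by
          rw [div_le_one (by positivity)]
          rw [le_div_iff₀ h0]; linarith
        calc k j * |HDinv (lam / k j) - Real.log (2 * (lam / k j))|
            ≤ k j * 1 := mul_le_mul_of_nonneg_left (habs.trans hfrac) (hk.nonneg j)
          _ = k j := mul_one _
  rw [tsum_zero] at key
  exact key

lemma rho_asymptotic (hk : IsKernel k)
    (hlog : Summable fun j : ℤ => k j * Real.log (2 + 1 / k j)) :
    Tendsto (fun lam => rho k lam - (∑' j : ℤ, k j) * Real.log (2 * lam)) atTop
      (nhds (∑' j : ℤ, k j * Real.log (1 / k j))) := by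
  have h := (tsum_g_tendsto hk hlog).add_const (∑' j : ℤ, k j * Real.log (1 / k j))
  rw [zero_add] at h
  apply h.congr'
  filter_upwards [eventually_gt_atTop (0:ℝ)] with lam hl
  rw [tsum_g_eq hk hlog hl]
  ring

/-- Lemma (properties of `ρ`): if `∑_{j∈S} k(j) log(2 + 1/k(j)) < ∞`, then `ρ` is a strictly
increasing continuous bijection of `[0,∞)` onto itself,
`ρ(λ) − |k|₁ log(2λ) → ∑_{j∈S} k(j) log(1/k(j))` as `λ → ∞`, and `ρ` is comparable to
`ρ̄₁ + ρ̄₂` from above and below. -/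
theorem rho_properties (k : ℤ → ℝ) (hk : IsKernel k)
    (hlog : Summable fun j : ℤ => k j * Real.log (2 + 1 / k j)) :
    (StrictMonoOn (rho k) (Ici 0) ∧ ContinuousOn (rho k) (Ici 0) ∧
      Set.BijOn (rho k) (Ici 0) (Ici 0)) ∧
    Tendsto (fun lam => rho k lam - (∑' j : ℤ, k j) * Real.log (2 * lam)) atTop
      (nhds (∑' j : ℤ, k j * Real.log (1 / k j))) ∧
    (∃ C₁ C₂ : ℝ, 0 < C₁ ∧ 0 < C₂ ∧ ∀ lam : ℝ, 0 < lam →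
      C₁ * (rhobar1 k lam + rhobar2 k lam) ≤ rho k lam ∧
      rho k lam ≤ C₂ * (rhobar1 k lam + rhobar2 k lam)) := by
  refine ⟨⟨rho_strictMonoOn hk hlog, rho_continuousOn hk hlog,
      fun x hx => rho_nonneg hk hlog hx, (rho_strictMonoOn hk hlog).injOn,
      rho_surjOn hk hlog⟩,
    rho_asymptotic hk hlog,
    1/4, 2, by norm_num, by norm_num, fun lam hl => rho_comparison hk hlog hl⟩
end
end

section
/- Let γ ≥ 2, δ > 0, M > 0 and c > 0, and define F̂: [0,∞) → [0,∞) by F̂(x) = e^{δM}·x^γ for x ∈ [0,M] and F̂(x) = M^γ·e^{δx} for x > M; set F̃ = c·F̂, t_* = M^{−γ}·e^{−δM}/(cδ) and C = M^{−γ}(M − (γ−1)/δ). Define φ: (0,∞) → ℝ by φ(t) = −(1/δ)·log(cδM^γ t) for t ∈ (0,t_*] and φ(t) = (c(γ−1)e^{δM} t + C)^{−1/(γ−1)} for t > t_*. Then φ is the relaxation function corresponding to F̃; that is, φ is strictly positive on (0,∞), differentiable with φ'(t) = −F̃(φ(t)) for all t > 0, and φ(t) → ∞ as t → 0+. -/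
open Filter Set

noncomputable section

/-- Lemma (explicit relaxation function): for `F̂(x) = e^{δM} x^γ` on `[0,M]`,
`F̂(x) = M^γ e^{δx}` for `x > M`, `F̃ = c F̂`, the function `φ` given by
`φ(t) = −(1/δ) log(cδM^γ t)` on `(0,t_*]` and
`φ(t) = (c(γ−1)e^{δM} t + C)^{−1/(γ−1)}` for `t > t_*`, with
`t_* = M^{−γ} e^{−δM}/(cδ)` and `C = M^{−γ}(M − (γ−1)/δ)`, is the relaxation function of
`F̃`: it is strictly positive, solves `φ' = −F̃(φ)` on `(0,∞)` and blows up at `0+`. -/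
theorem relaxation_function (γ δ M c : ℝ) (hγ : 2 ≤ γ) (hδ : 0 < δ) (hM : 0 < M) (hc : 0 < c)
    (Fhat : ℝ → ℝ)
    (hFhat : ∀ x : ℝ, 0 ≤ x →
      Fhat x = if x ≤ M then Real.exp (δ * M) * x ^ γ else M ^ γ * Real.exp (δ * x))
    (tstar Cc : ℝ)
    (htstar : tstar = M ^ (-γ) * Real.exp (-(δ * M)) / (c * δ))
    (hCc : Cc = M ^ (-γ) * (M - (γ - 1) / δ))
    (φ : ℝ → ℝ)
    (hφ : ∀ t : ℝ, 0 < t →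
      φ t = if t ≤ tstar then -(1 / δ) * Real.log (c * δ * M ^ γ * t)
        else (c * (γ - 1) * Real.exp (δ * M) * t + Cc) ^ (-(1 / (γ - 1)))) :
    (∀ t, 0 < t → 0 < φ t) ∧
    (∀ t, 0 < t → HasDerivAt φ (-(c * Fhat (φ t))) t) ∧
    Tendsto φ (nhdsWithin 0 (Ioi 0)) atTop := by
  have hγ1 : (0:ℝ) < γ - 1 := by linarith
  have hMγ : (0:ℝ) < M ^ γ := Real.rpow_pos_of_pos hM γ
  have hMneg : M ^ (-γ) = (M ^ γ)⁻¹ := Real.rpow_neg hM.le γ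
  have hE : (0:ℝ) < Real.exp (δ * M) := Real.exp_pos _
  set k : ℝ := c * δ * M ^ γ with hk_def
  have hk : 0 < k := by positivity
  set A : ℝ := c * (γ - 1) * Real.exp (δ * M) with hA_def
  have hA : 0 < A := by positivity
  set p : ℝ := -(1 / (γ - 1)) with hp_def
  have hp_neg : p < 0 := by
    have := one_div_pos.mpr hγ1
    rw [hp_def]; linarith
  have htstar_pos : 0 < tstar := by rw [htstar]; positivity
  have hktstar : k * tstar = Real.exp (-(δ * M)) := by
    rw [htstar, hMneg, hk_def]; field_simp
  have hM1γ : M ^ (1 - γ) = M ^ (-γ) * M := by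
    rw [show (1 - γ) = -γ + 1 by ring, Real.rpow_add hM, Real.rpow_one]
  have hM1γpos : (0:ℝ) < M ^ (1 - γ) := Real.rpow_pos_of_pos hM _
  have hkey : A * tstar + Cc = M ^ (1 - γ) := by
    rw [htstar, hCc, hA_def, hM1γ, Real.exp_neg]
    field_simp
    ring
  have hL : ∀ t, tstar ≤ t → M ^ (1 - γ) ≤ A * t + Cc := by
    intro t ht
    rw [← hkey]
    have := mul_le_mul_of_nonneg_left ht hA.le
    linarith
  have hLpos : ∀ t, tstar ≤ t → 0 < A * t + Cc := fun t ht =>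
    lt_of_lt_of_le hM1γpos (hL t ht)
  have hg2tstar : (A * tstar + Cc) ^ p = M := by
    rw [hkey, ← Real.rpow_mul hM.le,
      show (1 - γ) * p = 1 by rw [hp_def]; field_simp; ring, Real.rpow_one]
  have hφ1 : ∀ t, 0 < t → t ≤ tstar → φ t = -(1 / δ) * Real.log (k * t) := by
    intro t ht hle
    rw [hφ t ht, if_pos hle, hk_def]
  have hφ2 : ∀ t, tstar < t → φ t = (A * t + Cc) ^ p := by
    intro t ht
    rw [hφ t (htstar_pos.trans ht), if_neg (not_le.mpr ht), hA_def, hp_def]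
  have hφts : φ tstar = M := by
    rw [hφ1 tstar htstar_pos le_rfl, hktstar, Real.log_exp]
    field_simp
  have hφ_ge : ∀ t, 0 < t → t ≤ tstar → M ≤ φ t := by
    intro t ht hle
    have h1 : Real.log (k * t) ≤ -(δ * M) := by
      rw [← Real.log_exp (-(δ * M)), ← hktstar]
      exact Real.log_le_log (by positivity) (by nlinarith)
    rw [hφ1 t ht hle, show M = -(1/δ) * (-(δ*M)) by field_simp]
    have hneg : -(1/δ) ≤ 0 := by
      have := one_div_pos.mpr hδ; linarith
    exact mul_le_mul_of_nonpos_left h1 hneg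
  have hφ_gt : ∀ t, 0 < t → t < tstar → M < φ t := by
    intro t ht hlt
    have h1 : Real.log (k * t) < -(δ * M) := by
      rw [← Real.log_exp (-(δ * M)), ← hktstar]
      exact Real.log_lt_log (by positivity) (by nlinarith)
    rw [hφ1 t ht hlt.le, show M = -(1/δ) * (-(δ*M)) by field_simp]
    have hneg : -(1/δ) < 0 := by
      have := one_div_pos.mpr hδ; linarith
    exact mul_lt_mul_of_neg_left h1 hneg
  have hφ_pos2 : ∀ t, tstar < t → 0 < φ t := by
    intro t ht
    rw [hφ2 t ht]
    exact Real.rpow_pos_of_pos (hLpos t ht.le) p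
  have hφ_le2 : ∀ t, tstar < t → φ t ≤ M := by
    intro t ht
    rw [hφ2 t ht, ← hg2tstar]
    refine Real.rpow_le_rpow_of_nonpos (hLpos tstar le_rfl) ?_ hp_neg.le
    have := mul_le_mul_of_nonneg_left ht.le hA.le
    linarith
  have hpos : ∀ t, 0 < t → 0 < φ t := by
    intro t ht
    rcases le_or_gt t tstar with h | h
    · exact hM.trans_le (hφ_ge t ht h)
    · exact hφ_pos2 t h
  -- derivative of the first branch
  have hg1d : ∀ t : ℝ, 0 < t →
      HasDerivAt (fun s => -(1/δ) * Real.log (k * s)) (-(1/(δ*t))) t := by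
    intro t ht
    have h0 : HasDerivAt (fun s : ℝ => k * s) k t := by
      simpa using (hasDerivAt_id t).const_mul k
    have h1 := (Real.hasDerivAt_log (by positivity : k * t ≠ 0)).comp t h0
    have h2 := h1.const_mul (-(1/δ))
    refine h2.congr_deriv ?_
    field_simp
  -- derivative of the second branch
  have hg2d : ∀ t : ℝ, 0 < A * t + Cc →
      HasDerivAt (fun s => (A * s + Cc) ^ p)
        (-(c * Real.exp (δ*M) * ((A * t + Cc) ^ p) ^ γ)) t := by
    intro t hLp
    have h0 : HasDerivAt (fun s : ℝ => A * s + Cc) A t := by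
      simpa using ((hasDerivAt_id t).const_mul A).add_const Cc
    have h1 := (Real.hasDerivAt_rpow_const (p := p) (Or.inl hLp.ne')).comp t h0
    refine h1.congr_deriv ?_
    rw [← Real.rpow_mul hLp.le, show p * γ = p - 1 by rw [hp_def]; field_simp; ring,
      hA_def, hp_def]
    field_simp
  have hderiv : ∀ t, 0 < t → HasDerivAt φ (-(c * Fhat (φ t))) t := by
    intro t ht
    rcases lt_trichotomy t tstar with hlt | heq | hgt
    · -- first branch, strictly
      have hMlt : M < φ t := hφ_gt t ht hlt
      have hF : Fhat (φ t) = M ^ γ * Real.exp (δ * φ t) := by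
        rw [hFhat _ (hM.trans hMlt).le, if_neg (not_le.mpr hMlt)]
      have hexp : Real.exp (δ * φ t) = (k * t)⁻¹ := by
        rw [hφ1 t ht hlt.le, show δ * (-(1/δ) * Real.log (k*t)) = -Real.log (k*t) by
          field_simp, Real.exp_neg, Real.exp_log (by positivity)]
      have hdeq : -(c * Fhat (φ t)) = -(1/(δ*t)) := by
        rw [hF, hexp, hk_def]
        field_simp
      rw [hdeq]
      have hev : φ =ᶠ[nhds t] fun s => -(1/δ) * Real.log (k * s) := by
        filter_upwards [Ioo_mem_nhds ht hlt] with s hs using hφ1 s hs.1 hs.2.le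
      exact (hg1d t ht).congr_of_eventuallyEq hev
    · -- junction point
      subst heq
      -- now t is the junction point
      have hFts : Fhat (φ t) = Real.exp (δ * M) * M ^ γ := by
        rw [hφts, hFhat M hM.le, if_pos le_rfl]
      rw [hFts]
      set d : ℝ := -(c * (Real.exp (δ * M) * M ^ γ)) with hd_def
      have hW1 : HasDerivWithinAt φ d (Ioc 0 t) t := by
        have h := (hg1d t htstar_pos).hasDerivWithinAt (s := Ioc 0 t)
        have hdeq : -(1/(δ*t)) = d := by
          rw [hd_def, htstar, hMneg, Real.exp_neg]
          field_simp
        rw [hdeq] at h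
        exact h.congr (fun s hs => hφ1 s hs.1 hs.2) (hφ1 t htstar_pos le_rfl)
      have hW2 : HasDerivWithinAt φ d (Ici t) t := by
        have h := (hg2d t (hLpos t le_rfl)).hasDerivWithinAt (s := Ici t)
        rw [hg2tstar] at h
        have hdeq : -(c * Real.exp (δ*M) * M ^ γ) = d := by rw [hd_def]; ring
        rw [hdeq] at h
        refine h.congr (fun s hs => ?_) ?_
        · rcases eq_or_lt_of_le (Set.mem_Ici.mp hs) with rfl | hlt
          · rw [hφts, hg2tstar]
          · exact hφ2 s hlt
        · rw [hφts, hg2tstar]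
      refine (hW1.union hW2).hasDerivAt ?_
      refine Filter.mem_of_superset (Ioi_mem_nhds htstar_pos) fun x hx => ?_
      rcases le_or_gt x t with h | h
      · exact Or.inl ⟨hx, h⟩
      · exact Or.inr h.le
    · -- second branch
      have hLp : 0 < A * t + Cc := hLpos t hgt.le
      have hφt : φ t = (A * t + Cc) ^ p := hφ2 t hgt
      have hF : Fhat (φ t) = Real.exp (δ * M) * (φ t) ^ γ := by
        rw [hFhat _ (hφ_pos2 t hgt).le, if_pos (hφ_le2 t hgt)]
      have hdeq : -(c * Fhat (φ t)) = -(c * Real.exp (δ*M) * ((A * t + Cc) ^ p) ^ γ) := by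
        rw [hF, hφt]; ring
      rw [hdeq]
      have hev : φ =ᶠ[nhds t] fun s => (A * s + Cc) ^ p := by
        filter_upwards [Ioi_mem_nhds hgt] with s hs using hφ2 s hs
      exact (hg2d t hLp).congr_of_eventuallyEq hev
  refine ⟨hpos, hderiv, ?_⟩
  have hbase : Tendsto (fun t => -(1/δ) * Real.log (k * t)) (nhdsWithin 0 (Ioi 0)) atTop := by
    have h1 : Tendsto (fun t : ℝ => k * t) (nhdsWithin 0 (Ioi 0)) (nhdsWithin 0 (Ioi 0)) := by
      apply tendsto_nhdsWithin_of_tendsto_nhds_of_eventually_within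
      · have : Tendsto (fun t : ℝ => k * t) (nhds 0) (nhds (k * 0)) :=
          (continuous_const.mul continuous_id).tendsto 0
        simpa using this.mono_left nhdsWithin_le_nhds
      · filter_upwards [self_mem_nhdsWithin] with s hs using mul_pos hk hs
    have h2 : Tendsto (fun t : ℝ => Real.log (k * t)) (nhdsWithin 0 (Ioi 0)) atBot :=
      Real.tendsto_log_nhdsGT_zero.comp h1
    exact h2.const_mul_atBot_of_neg (by have := one_div_pos.mpr hδ; linarith)
  refine hbase.congr' ?_
  filter_upwards [Ioc_mem_nhdsGT htstar_pos] with s hs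
  exact (hφ1 s hs.1 hs.2).symm
end
end

section
/- Let γ ≥ 2 and F_γ(x) = |x|^γ for x ∈ ℝ. (i) For all p, q > 1 with 1/p + 1/q = 1 and all x, y ∈ ℝ: F_γ(x+y) ≤ p^{γ−1}·F_γ(x) + q^{γ−1}·F_γ(y). (ii) For every δ > 0, every λ ≥ 1 and all x, y ∈ ℝ: F_γ(x+y) ≤ C̃·λ^{γ−1}·F_γ(x) + (1 + δ/λ)·F_γ(y), where C̃ = ((1+δ)(γ−1)/δ)^{γ−1}. -/
noncomputable section

open Real Set

private lemma Fgamma_part1 (γ : ℝ) (hγ : 2 ≤ γ) (p q : ℝ) (hp : 1 < p) (hq : 1 < q)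
    (hpq : 1 / p + 1 / q = 1) (x y : ℝ) :
    |x + y| ^ γ ≤ p ^ (γ - 1) * |x| ^ γ + q ^ (γ - 1) * |y| ^ γ := by
  have hγ1 : (1 : ℝ) ≤ γ := by linarith
  have hp0 : (0 : ℝ) < p := by linarith
  have hq0 : (0 : ℝ) < q := by linarith
  have step1 : |x + y| ^ γ ≤ (|x| + |y|) ^ γ :=
    Real.rpow_le_rpow (abs_nonneg _) (abs_add_le x y) (by linarith)
  have step2 : |x| + |y| = (1 / p) * (p * |x|) + (1 / q) * (q * |y|) := by
    field_simp
  have key : ((1 / p) * (p * |x|) + (1 / q) * (q * |y|)) ^ γ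
      ≤ (1 / p) * (p * |x|) ^ γ + (1 / q) * (q * |y|) ^ γ := by
    have h := (convexOn_rpow hγ1).2 (Set.mem_Ici.mpr (by positivity : (0:ℝ) ≤ p * |x|))
      (Set.mem_Ici.mpr (by positivity : (0:ℝ) ≤ q * |y|))
      (by positivity : (0:ℝ) ≤ 1 / p) (by positivity : (0:ℝ) ≤ 1 / q) hpq
    simpa [smul_eq_mul] using h
  have e1 : (1 / p) * (p * |x|) ^ γ = p ^ (γ - 1) * |x| ^ γ := by
    rw [Real.mul_rpow hp0.le (abs_nonneg _), Real.rpow_sub hp0, Real.rpow_one]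
    field_simp
  have e2 : (1 / q) * (q * |y|) ^ γ = q ^ (γ - 1) * |y| ^ γ := by
    rw [Real.mul_rpow hq0.le (abs_nonneg _), Real.rpow_sub hq0, Real.rpow_one]
    field_simp
  calc |x + y| ^ γ ≤ (|x| + |y|) ^ γ := step1
    _ = ((1 / p) * (p * |x|) + (1 / q) * (q * |y|)) ^ γ := by rw [step2]
    _ ≤ (1 / p) * (p * |x|) ^ γ + (1 / q) * (q * |y|) ^ γ := key
    _ = p ^ (γ - 1) * |x| ^ γ + q ^ (γ - 1) * |y| ^ γ := by rw [e1, e2]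

/-- Lemma (convexity inequalities for `F_γ(x) = |x|^γ`, `γ ≥ 2`):
(i) for `p, q > 1` with `1/p + 1/q = 1`,
`|x+y|^γ ≤ p^{γ−1}|x|^γ + q^{γ−1}|y|^γ`;
(ii) for `δ > 0` and `λ ≥ 1`,
`|x+y|^γ ≤ C̃ λ^{γ−1}|x|^γ + (1 + δ/λ)|y|^γ` with `C̃ = ((1+δ)(γ−1)/δ)^{γ−1}`. -/
theorem Fgamma_inequalities (γ : ℝ) (hγ : 2 ≤ γ) :
    (∀ p q : ℝ, 1 < p → 1 < q → 1 / p + 1 / q = 1 → ∀ x y : ℝ,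
      |x + y| ^ γ ≤ p ^ (γ - 1) * |x| ^ γ + q ^ (γ - 1) * |y| ^ γ) ∧
    (∀ δ : ℝ, 0 < δ → ∀ lam : ℝ, 1 ≤ lam → ∀ x y : ℝ,
      |x + y| ^ γ ≤ ((1 + δ) * (γ - 1) / δ) ^ (γ - 1) * lam ^ (γ - 1) * |x| ^ γ +
        (1 + δ / lam) * |y| ^ γ) := by
  constructor
  · exact fun p q hp hq hpq x y => Fgamma_part1 γ hγ p q hp hq hpq x y
  · intro δ hδ lam hlam x y
    have hlam0 : (0 : ℝ) < lam := by linarith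
    have hg1 : (1 : ℝ) ≤ γ - 1 := by linarith
    have hg0 : (0 : ℝ) < γ - 1 := by linarith
    set θ : ℝ := (γ - 1)⁻¹ with hθdef
    have hθ0 : 0 < θ := by positivity
    have hθ1 : θ ≤ 1 := by
      rw [hθdef]
      exact inv_le_one_of_one_le₀ hg1
    set ε : ℝ := δ / lam with hεdef
    have hε0 : 0 < ε := by positivity
    set q : ℝ := (1 + ε) ^ θ with hqdef
    have h1ε : (0 : ℝ) < 1 + ε := by linarith
    have hq1 : 1 < q := by
      rw [hqdef]
      exact Real.one_lt_rpow_iff_of_pos h1ε |>.mpr (Or.inl ⟨by linarith, hθ0⟩)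
    have hqpow : q ^ (γ - 1) = 1 + ε := by
      rw [hqdef, ← Real.rpow_mul h1ε.le,
        show θ * (γ - 1) = 1 by rw [hθdef]; field_simp, Real.rpow_one]
    set p : ℝ := q / (q - 1) with hpdef
    have hqm1 : 0 < q - 1 := by linarith
    have hp1 : 1 < p := by
      rw [hpdef, lt_div_iff₀ hqm1]
      linarith
    have hpq : 1 / p + 1 / q = 1 := by
      rw [hpdef]
      field_simp
      ring
    -- Bernoulli bound
    set D : ℝ := 1 + (1 - θ) * ε with hDdef
    have hD0 : 0 < D := by nlinarith
    have hB : (1 + ε) ^ (1 - θ) ≤ D := by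
      rw [hDdef]
      exact rpow_one_add_le_one_add_mul_self (by linarith) (by linarith) (by linarith)
    have hBpos : 0 < (1 + ε) ^ (1 - θ) := Real.rpow_pos_of_pos h1ε _
    have hq_lb : (1 + ε) / D ≤ q := by
      rw [hqdef, show θ = 1 - (1 - θ) by ring, Real.rpow_sub h1ε, Real.rpow_one]
      exact div_le_div_of_nonneg_left h1ε.le hBpos hB
    have hqm1_lb : θ * ε / D ≤ q - 1 := by
      have : (1 + ε) / D - 1 = θ * ε / D := by
        field_simp
        ring
      linarith [hq_lb, this]
    have hθε : 0 < θ * ε := by positivity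
    have hp_ub : p ≤ (1 + ε) / (θ * ε) := by
      have h1 : 1 / (q - 1) ≤ D / (θ * ε) := by
        rw [← one_div_div (θ * ε) D]
        exact one_div_le_one_div_of_le (by positivity) hqm1_lb
      have h2 : p = 1 + 1 / (q - 1) := by
        rw [hpdef]
        field_simp
        ring
      have h3 : 1 + D / (θ * ε) = (1 + ε) / (θ * ε) := by
        rw [hDdef]
        field_simp
        ring
      linarith
    have hp_ub2 : p ≤ (1 + δ) * (γ - 1) / δ * lam := by
      have e : (1 + ε) / (θ * ε) = (γ - 1) * (lam + δ) / δ := by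
        rw [hθdef, hεdef]
        field_simp
      have h4 : (γ - 1) * (lam + δ) / δ ≤ (1 + δ) * (γ - 1) / δ * lam := by
        rw [div_le_iff₀ hδ]
        have : lam + δ ≤ (1 + δ) * lam := by nlinarith
        calc (γ - 1) * (lam + δ) ≤ (γ - 1) * ((1 + δ) * lam) := by nlinarith
          _ = (1 + δ) * (γ - 1) / δ * lam * δ := by field_simp
      linarith [hp_ub, e ▸ hp_ub, h4]
    have hC0 : (0 : ℝ) < (1 + δ) * (γ - 1) / δ := by positivity
    have hppow : p ^ (γ - 1) ≤ ((1 + δ) * (γ - 1) / δ) ^ (γ - 1) * lam ^ (γ - 1) := by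
      rw [← Real.mul_rpow hC0.le hlam0.le]
      exact Real.rpow_le_rpow (by linarith) hp_ub2 (by linarith)
    have main := Fgamma_part1 γ hγ p q hp1 hq1 hpq x y
    have h5 : p ^ (γ - 1) * |x| ^ γ ≤ ((1 + δ) * (γ - 1) / δ) ^ (γ - 1) * lam ^ (γ - 1) * |x| ^ γ :=
      mul_le_mul_of_nonneg_right hppow (by positivity)
    have h6 : q ^ (γ - 1) * |y| ^ γ = (1 + δ / lam) * |y| ^ γ := by
      rw [hqpow, hεdef]
    linarith [main, h5, h6.le]
end
end
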